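/- Let k be a field and let m, ℓ be positive integers. Then every persistence module over the poset C_{m,ℓ} is interval-decomposable; equivalently, every indecomposable persistence module over C_{m,ℓ} is isomorphic to an interval module. -/

import Mathlib

open CategoryTheory CategoryTheory.Limits

attribute [local instance] CategoryTheory.Limits.HasFiniteBiproducts.of_hasFiniteProducts

section Posets

variable {P : Type} [PartialOrder P]

/-- Zigzag connectivity of two elements of a subset `S` of a poset: they are linked by a
zigzag of comparable pairs inside `S`. -/
def ZigzagConnIn (S : Set P) (a b : S) : Prop :=
  Relation.ReflTransGen (fun u v : S => (u : P) ≤ v ∨ (v : P) ≤ u) a b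

/-- A subset of a poset is convex if `x ≤ z ≤ y` with `x, y` in the subset implies `z` is. -/
def IsConvex (S : Set P) : Prop :=
  ∀ ⦃x y z : P⦄, x ∈ S → y ∈ S → x ≤ z → z ≤ y → z ∈ S

/-- An interval of a poset: a nonempty, convex, zigzag-connected subset. -/
def IsIntervalSet (S : Set P) : Prop :=
  S.Nonempty ∧ IsConvex S ∧ ∀ a b : S, ZigzagConnIn S a b

end Posets

section IntervalModules

variable (k : Type) [Field k] {P : Type} [PartialOrder P]

open Classical in
/-- The linear map between the fibers of the interval module. -/
noncomputable def intervalModuleAux (S : Set P) (p q : P) :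
    ↥(if p ∈ S then (⊤ : Submodule k k) else ⊥) →ₗ[k]
      ↥(if q ∈ S then (⊤ : Submodule k k) else ⊥) where
  toFun x := ⟨(if p ∈ S ∧ q ∈ S then (1 : k) else 0) * x.1, by
    by_cases hq : q ∈ S
    · rw [if_pos hq]; exact Submodule.mem_top
    · have hp : ¬ (p ∈ S ∧ q ∈ S) := fun h => hq h.2
      rw [if_neg hq, if_neg hp, zero_mul]; exact Submodule.zero_mem _⟩
  map_add' x y := by ext; simp [mul_add]
  map_smul' c x := by ext; simp

open Classical in
/-- The interval module `k_S` associated to a convex subset `S` of a poset `P`: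
it is `k` at points of `S`, `0` elsewhere, with identity structure maps inside `S`. -/
noncomputable def intervalModule (S : Set P) (hS : IsConvex S) : P ⥤ ModuleCat.{0} k where
  obj p := ModuleCat.of k ↥(if p ∈ S then (⊤ : Submodule k k) else ⊥)
  map {p q} _ := ModuleCat.ofHom (intervalModuleAux k S p q)
  map_id p := by
    apply ModuleCat.hom_ext
    apply LinearMap.ext
    rintro ⟨x, hx⟩
    apply Subtype.ext
    show (if p ∈ S ∧ p ∈ S then (1 : k) else 0) * x = x
    by_cases hp : p ∈ S
    · simp [hp]
    · rw [if_neg hp] at hx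
      simp [hp, (Submodule.mem_bot k).mp hx]
  map_comp {p q r} f g := by
    apply ModuleCat.hom_ext
    apply LinearMap.ext
    rintro ⟨x, hx⟩
    apply Subtype.ext
    show (if p ∈ S ∧ r ∈ S then (1 : k) else 0) * x
      = (if q ∈ S ∧ r ∈ S then (1 : k) else 0) * ((if p ∈ S ∧ q ∈ S then (1 : k) else 0) * x)
    by_cases hp : p ∈ S
    · by_cases hr : r ∈ S
      · have hq : q ∈ S := hS hp hr (leOfHom f) (leOfHom g)
        simp [hp, hq, hr]
      · simp [hr]
    · rw [if_neg hp] at hx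
      simp [(Submodule.mem_bot k).mp hx]

/-- A persistence module is an interval module if it is isomorphic to `k_S` for some
interval `S`. -/
def IsIntervalModule (M : P ⥤ ModuleCat.{0} k) : Prop :=
  ∃ (S : Set P) (hS : IsIntervalSet S), Nonempty (M ≅ intervalModule k S hS.2.1)

/-- A persistence module is interval-decomposable if it is isomorphic to a finite direct sum
of interval modules. -/
def IsIntervalDecomposable (M : P ⥤ ModuleCat.{0} k) : Prop :=
  ∃ (n : ℕ) (J : Fin n → (P ⥤ ModuleCat.{0} k)),
    (∀ i, IsIntervalModule k (J i)) ∧ Nonempty (M ≅ ⨁ J)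

/-- The support of a persistence module. -/
def moduleSupport (M : P ⥤ ModuleCat.{0} k) : Set P := {p : P | ¬ IsZero (M.obj p)}

/-- A persistence module valued in finite-dimensional vector spaces. -/
def PointwiseFinite (M : P ⥤ ModuleCat.{0} k) : Prop :=
  ∀ p : P, FiniteDimensional k (M.obj p)

end IntervalModules

section Approximations

variable {C : Type*} [Category C]

/-- `f : X ⟶ M` is a right `𝒳`-approximation of `M` if `X ∈ 𝒳` and every morphism
from an object of `𝒳` to `M` factors through `f`. -/
def IsRightApproximation (𝒳 : C → Prop) {X M : C} (f : X ⟶ M) : Prop :=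
  𝒳 X ∧ ∀ ⦃Y : C⦄ (g : Y ⟶ M), 𝒳 Y → ∃ h : Y ⟶ X, h ≫ f = g

/-- `f : X ⟶ M` is right minimal if every endomorphism `g` of `X` with `f ∘ g = f`
is an isomorphism. -/
def IsRightMinimal {X M : C} (f : X ⟶ M) : Prop :=
  ∀ g : X ⟶ X, g ≫ f = f → IsIso g

end Approximations

/-- An interval cover: a right minimal approximation by interval-decomposable modules. -/
def IsIntervalCover (k : Type) [Field k] {P : Type} [PartialOrder P]
    {X M : P ⥤ ModuleCat.{0} k} (f : X ⟶ M) : Prop :=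
  IsRightApproximation (IsIntervalDecomposable k) f ∧ IsRightMinimal f

section Resolutions

variable {C : Type*} [Category C] [Limits.HasZeroMorphisms C]

/-- `M` admits a resolution `0 ⟶ J_n ⟶ ⋯ ⟶ J_1 ⟶ J_0 ⟶ M ⟶ 0` of length `n` by objects
of `𝒳`: an exact sequence in which every `J_i` lies in `𝒳`.  (The data is encoded by an
`ℕ`-indexed complex which vanishes in degrees `> n` and is exact everywhere.) -/
def HasResolutionOfLength (𝒳 : C → Prop) (n : ℕ) (M : C) : Prop :=
  ∃ (J : ℕ → C) (d : ∀ i, J (i + 1) ⟶ J i) (f : J 0 ⟶ M) (w0 : d 0 ≫ f = 0)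
    (w : ∀ i, d (i + 1) ≫ d i = 0),
    (∀ i, i ≤ n → 𝒳 (J i)) ∧ (∀ i, n < i → IsZero (J i)) ∧
    Epi f ∧ (ShortComplex.mk (d 0) f w0).Exact ∧
    ∀ i, (ShortComplex.mk (d (i + 1)) (d i) (w i)).Exact

end Resolutions

section CmlPoset

/-- The underlying set of the poset `C_{m,ℓ}`: a minimum `0̂`, a maximum `1̂`, and two
incomparable chains `a_1 < ⋯ < a_m` and `b_1 < ⋯ < b_ℓ` in between. -/
inductive Cml (m l : ℕ) : Type where
  | bot : Cml m l
  | a : Fin m → Cml m l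
  | b : Fin l → Cml m l
  | top : Cml m l
  deriving DecidableEq

namespace Cml

variable {m l : ℕ}

/-- The order relation of `C_{m,ℓ}`. -/
protected def le : Cml m l → Cml m l → Prop
  | .bot, _ => True
  | .a i, .a j => i ≤ j
  | .a _, .top => True
  | .b i, .b j => i ≤ j
  | .b _, .top => True
  | .top, .top => True
  | _, _ => False

instance : PartialOrder (Cml m l) where
  le := Cml.le
  le_refl x := by cases x <;> simp [Cml.le]
  le_trans x y z hxy hyz := by
    cases x <;> cases y <;> cases z <;> simp_all [Cml.le] <;> omega
  le_antisymm x y hxy hyx := by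
    cases x <;> cases y <;> simp_all [Cml.le] <;> omega

end Cml

end CmlPoset


/-! # Additions for the proof -/

/-! ## Splitting machinery -/

section Splitting
variable {k : Type} [Field k] {P : Type} [PartialOrder P]

/-- The data needed to split off an interval module summand. -/
structure SplitData (k : Type) [Field k] {P : Type} [PartialOrder P]
    (M : P ⥤ ModuleCat.{0} k) where
  S : Set P
  hS : IsIntervalSet S
  x : ∀ p : P, M.obj p
  lam : ∀ p : P, M.obj p →ₗ[k] k
  x_zero : ∀ p, p ∉ S → x p = 0
  lam_zero : ∀ p, p ∉ S → lam p = 0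
  pair : ∀ p, p ∈ S → lam p (x p) = 1
  x_nat : ∀ p q (h : p ≤ q), p ∈ S → M.map (homOfLE h) (x p) = x q
  lam_nat : ∀ p q (h : p ≤ q), q ∈ S → (lam q).comp (M.map (homOfLE h)).hom = lam p

namespace SplitData

open Classical

variable {M : P ⥤ ModuleCat.{0} k} (D : SplitData k M)

/-- The interval module associated to the data. -/
noncomputable def I : P ⥤ ModuleCat.{0} k := intervalModule k D.S D.hS.2.1

open Classical in
noncomputable def sigmaApp (p : P) :
    ↥(if p ∈ D.S then (⊤ : Submodule k k) else ⊥) →ₗ[k] M.obj p where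
  toFun c := (c : k) • D.x p
  map_add' c d := by simp [add_smul]
  map_smul' r c := by simp [mul_smul]

noncomputable def sigma : D.I ⟶ M where
  app p := ModuleCat.ofHom (D.sigmaApp p)
  naturality p q f := by
    apply ModuleCat.hom_ext
    apply LinearMap.ext
    rintro ⟨cv, hc⟩
    show ((if p ∈ D.S ∧ q ∈ D.S then (1:k) else 0) * cv) • D.x q
        = M.map f (cv • D.x p)
    rw [map_smul]
    by_cases hp : p ∈ D.S
    · have hx : M.map f (D.x p) = D.x q := D.x_nat p q (leOfHom f) hp
      by_cases hq : q ∈ D.S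
      · simp [hp, hq, hx]
      · simp [hp, hq, hx, D.x_zero q hq]
    · have hc : cv = 0 := by
        rw [if_neg hp] at hc
        exact (Submodule.mem_bot k).mp hc
      simp [hp, hc]

open Classical in
noncomputable def rhoApp (p : P) :
    M.obj p →ₗ[k] ↥(if p ∈ D.S then (⊤ : Submodule k k) else ⊥) where
  toFun z := ⟨D.lam p z, by
    by_cases hp : p ∈ D.S
    · simp [hp]
    · rw [if_neg hp]
      rw [D.lam_zero p hp]
      exact (Submodule.mem_bot k).mpr (LinearMap.zero_apply _)⟩
  map_add' y z := by apply Subtype.ext; simp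
  map_smul' r z := by apply Subtype.ext; simp

noncomputable def rho : M ⟶ D.I where
  app p := ModuleCat.ofHom (D.rhoApp p)
  naturality p q f := by
    apply ModuleCat.hom_ext
    apply LinearMap.ext
    intro z
    apply Subtype.ext
    show D.lam q (M.map f z) = (if p ∈ D.S ∧ q ∈ D.S then (1:k) else 0) * D.lam p z
    by_cases hq : q ∈ D.S
    · have hl : D.lam q (M.map f z) = D.lam p z := by
        conv_rhs => rw [← D.lam_nat p q (leOfHom f) hq]
        rfl
      by_cases hp : p ∈ D.S
      · simp [hp, hq, hl]
      · have h0 : D.lam p z = 0 := by rw [D.lam_zero p hp]; rfl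
        simp [hp, hq, hl, h0]
    · have h0 : D.lam q = 0 := D.lam_zero q hq
      have : D.lam q (M.map f z) = 0 := by rw [h0]; rfl
      simp [hq, this]

/-- The complement functor: pointwise kernel of `lam`. -/
noncomputable def Nfun : P ⥤ ModuleCat.{0} k where
  obj p := ModuleCat.of k ↥(LinearMap.ker (D.lam p))
  map {p q} f := ModuleCat.ofHom <| LinearMap.restrict (M.map f).hom (p := LinearMap.ker (D.lam p))
      (q := LinearMap.ker (D.lam q)) (fun z hz => by
    by_cases hq : q ∈ D.S
    · have hl : D.lam q (M.map f z) = D.lam p z := by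
        conv_rhs => rw [← D.lam_nat p q (leOfHom f) hq]
        rfl
      simp only [LinearMap.mem_ker] at hz ⊢
      rw [hl, hz]
    · simp only [LinearMap.mem_ker]
      rw [D.lam_zero q hq]
      rfl)
  map_id p := by
    apply ModuleCat.hom_ext
    apply LinearMap.ext
    rintro ⟨z, hz⟩
    apply Subtype.ext
    show M.map (𝟙 p) z = z
    rw [M.map_id]
    rfl
  map_comp {p q r} f g := by
    apply ModuleCat.hom_ext
    apply LinearMap.ext
    rintro ⟨z, hz⟩
    apply Subtype.ext
    show M.map (f ≫ g) z = M.map g (M.map f z)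
    rw [M.map_comp]
    rfl

noncomputable def iota : D.Nfun ⟶ M where
  app p := ModuleCat.ofHom (LinearMap.ker (D.lam p)).subtype
  naturality p q f := by
    apply ModuleCat.hom_ext
    apply LinearMap.ext
    rintro ⟨z, hz⟩
    rfl

noncomputable def piApp (p : P) : M.obj p →ₗ[k] ↥(LinearMap.ker (D.lam p)) :=
  LinearMap.codRestrict (LinearMap.ker (D.lam p))
    (LinearMap.id - (D.lam p).smulRight (D.x p)) (fun z => by
      simp only [LinearMap.mem_ker, LinearMap.sub_apply, LinearMap.id_apply,
        LinearMap.smulRight_apply, map_sub, map_smul, smul_eq_mul]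
      by_cases hp : p ∈ D.S
      · rw [D.pair p hp]; ring
      · rw [D.lam_zero p hp]; simp)

noncomputable def pi : M ⟶ D.Nfun where
  app p := ModuleCat.ofHom (D.piApp p)
  naturality p q f := by
    apply ModuleCat.hom_ext
    apply LinearMap.ext
    intro z
    apply Subtype.ext
    show M.map f z - D.lam q (M.map f z) • D.x q
        = M.map f (z - D.lam p z • D.x p)
    rw [map_sub, map_smul]
    by_cases hp : p ∈ D.S
    · have hx : M.map f (D.x p) = D.x q := D.x_nat p q (leOfHom f) hp
      by_cases hq : q ∈ D.S
      · have hl : D.lam q (M.map f z) = D.lam p z := by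
          conv_rhs => rw [← D.lam_nat p q (leOfHom f) hq]
          rfl
        rw [hx, hl]
      · have h0 : D.lam q = 0 := D.lam_zero q hq
        have h0' : D.lam q (M.map f z) = 0 := by rw [h0]; rfl
        rw [hx, h0', D.x_zero q hq]
        simp
    · have h0' : D.lam p z = 0 := by rw [D.lam_zero p hp]; rfl
      by_cases hq : q ∈ D.S
      · have hl : D.lam q (M.map f z) = D.lam p z := by
          conv_rhs => rw [← D.lam_nat p q (leOfHom f) hq]
          rfl
        rw [hl, h0']
        simp
      · have h0q : D.lam q (M.map f z) = 0 := by rw [D.lam_zero q hq]; rfl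
        rw [h0q, h0']
        simp

theorem sigma_rho : D.sigma ≫ D.rho = 𝟙 D.I := by
  apply NatTrans.ext
  funext p
  apply ModuleCat.hom_ext
  apply LinearMap.ext
  rintro ⟨cv, hc⟩
  apply Subtype.ext
  show D.lam p (cv • D.x p) = cv
  rw [map_smul, smul_eq_mul]
  by_cases hp : p ∈ D.S
  · rw [D.pair p hp, mul_one]
  · have hc : cv = 0 := by
      rw [if_neg hp] at hc
      exact (Submodule.mem_bot k).mp hc
    rw [D.lam_zero p hp]
    simp [hc]

theorem iota_pi : D.iota ≫ D.pi = 𝟙 D.Nfun := by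
  apply NatTrans.ext
  funext p
  apply ModuleCat.hom_ext
  apply LinearMap.ext
  rintro ⟨z, hz⟩
  apply Subtype.ext
  show z - D.lam p z • D.x p = z
  rw [LinearMap.mem_ker.mp hz]
  simp

theorem sigma_pi : D.sigma ≫ D.pi = 0 := by
  apply NatTrans.ext
  funext p
  apply ModuleCat.hom_ext
  apply LinearMap.ext
  rintro ⟨cv, hc⟩
  apply Subtype.ext
  show cv • D.x p - D.lam p (cv • D.x p) • D.x p = (0 : M.obj p)
  rw [map_smul, smul_eq_mul]
  by_cases hp : p ∈ D.S
  · rw [D.pair p hp, mul_one, sub_self]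
  · rw [D.x_zero p hp]
    simp

theorem iota_rho : D.iota ≫ D.rho = 0 := by
  apply NatTrans.ext
  funext p
  apply ModuleCat.hom_ext
  apply LinearMap.ext
  rintro ⟨z, hz⟩
  apply Subtype.ext
  show D.lam p z = 0
  exact LinearMap.mem_ker.mp hz

theorem rho_sigma_add_pi_iota : D.rho ≫ D.sigma + D.pi ≫ D.iota = 𝟙 M := by
  apply NatTrans.ext
  funext p
  apply ModuleCat.hom_ext
  apply LinearMap.ext
  intro z
  show D.lam p z • D.x p + (z - D.lam p z • D.x p) = z
  abel

end SplitData
end Splitting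

/-! ## Biproduct assembly -/

section Assembly
variable {C : Type*} [Category C] [Preadditive C] [HasFiniteBiproducts C]

attribute [local instance] hasBinaryBiproducts_of_finite_biproducts

theorem isZero_biproduct_empty (J : Fin 0 → C) : IsZero (⨁ J) := by
  rw [IsZero.iff_id_eq_zero]
  apply biproduct.hom_ext
  intro j
  exact j.elim0

noncomputable def iso_biproduct_cons {M I N : C} (σ : I ⟶ M) (ρ : M ⟶ I) (ι : N ⟶ M) (π : M ⟶ N)
    (h1 : σ ≫ ρ = 𝟙 I) (h2 : ι ≫ π = 𝟙 N) (h3 : σ ≫ π = 0) (h4 : ι ≫ ρ = 0)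
    (h5 : ρ ≫ σ + π ≫ ι = 𝟙 M) {n : ℕ} (J' : Fin n → C) (e : N ≅ ⨁ J') :
    M ≅ ⨁ (Fin.cons I J' : Fin (n+1) → C) where
  hom := biproduct.lift (Fin.cases ρ (fun i => π ≫ e.hom ≫ biproduct.π J' i))
  inv := biproduct.desc (Fin.cases σ (fun i => biproduct.ι J' i ≫ e.inv ≫ ι))
  hom_inv_id := by
    rw [biproduct.lift_desc, Fin.sum_univ_succ]
    have key : ∑ i : Fin n,
        (Fin.cases (motive := fun j => M ⟶ (Fin.cons I J' : Fin (n+1) → C) j)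
          ρ (fun i => π ≫ e.hom ≫ biproduct.π J' i) i.succ) ≫
        (Fin.cases (motive := fun j => (Fin.cons I J' : Fin (n+1) → C) j ⟶ M)
          σ (fun i => biproduct.ι J' i ≫ e.inv ≫ ι) i.succ) = π ≫ ι := by
      show ∑ i : Fin n, (π ≫ e.hom ≫ biproduct.π J' i) ≫ (biproduct.ι J' i ≫ e.inv ≫ ι) = π ≫ ι
      have step : ∀ i : Fin n,
          (π ≫ e.hom ≫ biproduct.π J' i) ≫ (biproduct.ι J' i ≫ e.inv ≫ ι)
            = π ≫ e.hom ≫ ((biproduct.π J' i ≫ biproduct.ι J' i) ≫ (e.inv ≫ ι)) := by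
        intro i
        simp only [Category.assoc]
      rw [Finset.sum_congr rfl (fun i _ => step i), ← Preadditive.comp_sum,
        ← Preadditive.comp_sum, ← Preadditive.sum_comp, biproduct.total]
      simp
    rw [key]
    show ρ ≫ σ + π ≫ ι = 𝟙 M
    exact h5
  inv_hom_id := by
    apply biproduct.hom_ext'
    intro j
    apply biproduct.hom_ext
    intro i
    simp only [biproduct.ι_desc_assoc, Category.assoc, biproduct.lift_π, Category.comp_id]
    induction j using Fin.cases with
    | zero =>
      induction i using Fin.cases with
      | zero =>
        show σ ≫ ρ = biproduct.ι (Fin.cons I J') 0 ≫ biproduct.π (Fin.cons I J') 0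
        rw [h1, biproduct.ι_π_self]
        rfl
      | succ i =>
        show σ ≫ π ≫ e.hom ≫ biproduct.π J' i = biproduct.ι (Fin.cons I J') 0 ≫ biproduct.π (Fin.cons I J') i.succ
        rw [biproduct.ι_π_ne _ (Fin.succ_ne_zero i).symm]
        rw [← Category.assoc, h3, zero_comp]
        rfl
    | succ j =>
      induction i using Fin.cases with
      | zero =>
        show (biproduct.ι J' j ≫ e.inv ≫ ι) ≫ ρ = biproduct.ι (Fin.cons I J') j.succ ≫ biproduct.π (Fin.cons I J') 0
        rw [biproduct.ι_π_ne _ (Fin.succ_ne_zero j)]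
        simp only [Category.assoc, h4, comp_zero]
        rfl
      | succ i =>
        show (biproduct.ι J' j ≫ e.inv ≫ ι) ≫ (π ≫ e.hom ≫ biproduct.π J' i) = biproduct.ι (Fin.cons I J') j.succ ≫ biproduct.π (Fin.cons I J') i.succ
        have lhs : (biproduct.ι J' j ≫ e.inv ≫ ι) ≫ (π ≫ e.hom ≫ biproduct.π J' i)
            = biproduct.ι J' j ≫ biproduct.π J' i := by
          slice_lhs 3 4 => rw [h2]
          simp
        rw [lhs]
        rcases eq_or_ne j i with rfl | hne
        · rw [biproduct.ι_π_self, biproduct.ι_π_self]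
          rfl
        · rw [biproduct.ι_π_ne _ hne, biproduct.ι_π_ne _ (fun hc => hne (Fin.succ_injective n hc))]
          rfl

noncomputable def iso_of_isZero_right {X Z : C} (hZ : IsZero Z) : X ⊞ Z ≅ X where
  hom := biprod.fst
  inv := biprod.inl
  hom_inv_id := by
    apply biprod.hom_ext'
    · simp
    · have h0 : (biprod.inr : Z ⟶ X ⊞ Z) = 0 := hZ.eq_of_src _ _
      rw [h0]
      simp
  inv_hom_id := by simp

/-- `⨁ J ≅ J 0 ⊞ ⨁ (J ∘ Fin.succ)` for `J : Fin (n+1) → C`. -/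
noncomputable def biproductSuccIso {n : ℕ} (J : Fin (n+1) → C) :
    (⨁ J) ≅ (J 0) ⊞ (⨁ (fun i : Fin n => J i.succ)) where
  hom := biprod.lift (biproduct.π J 0) (biproduct.lift (fun i => biproduct.π J i.succ))
  inv := biprod.desc (biproduct.ι J 0) (biproduct.desc (fun i => biproduct.ι J i.succ))
  hom_inv_id := by
    rw [biprod.lift_desc, biproduct.lift_desc, ← biproduct.total, Fin.sum_univ_succ]
  inv_hom_id := by
    apply biprod.hom_ext'
    · apply biprod.hom_ext
      · simp only [biprod.inl_desc_assoc, Category.assoc, biprod.lift_fst, Category.comp_id,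
          biprod.inl_fst, biproduct.ι_π_self]
      · rw [biprod.inl_desc_assoc, Category.assoc, biprod.lift_snd, Category.comp_id, biprod.inl_snd]
        apply biproduct.hom_ext
        intro i
        simp only [Category.assoc, biproduct.lift_π, zero_comp]
        rw [biproduct.ι_π_ne _ (Fin.succ_ne_zero i).symm]
    · apply biprod.hom_ext
      · rw [biprod.inr_desc_assoc, Category.assoc, biprod.lift_fst, Category.comp_id, biprod.inr_fst]
        apply biproduct.hom_ext'
        intro i
        simp only [biproduct.ι_desc_assoc, zero_comp, comp_zero]
        rw [biproduct.ι_π_ne _ (Fin.succ_ne_zero i)]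
      · rw [biprod.inr_desc_assoc, Category.assoc, biprod.lift_snd, Category.comp_id, biprod.inr_snd]
        apply biproduct.hom_ext'
        intro i
        apply biproduct.hom_ext
        intro i'
        simp only [biproduct.ι_desc_assoc, Category.assoc, biproduct.lift_π, Category.id_comp]
        rcases eq_or_ne i i' with rfl | hne
        · rw [biproduct.ι_π_self, biproduct.ι_π_self]
        · rw [biproduct.ι_π_ne _ hne, biproduct.ι_π_ne _ (fun hc => hne (Fin.succ_injective n hc))]

end Assembly

namespace Cml
variable {m l : ℕ}

-- my additions
theorem bot_le' (p : Cml m l) : Cml.bot ≤ p := by cases p <;> trivial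
theorem le_top' (p : Cml m l) : p ≤ Cml.top := by cases p <;> trivial
@[simp] theorem a_le_a {s t : Fin m} : (Cml.a s : Cml m l) ≤ Cml.a t ↔ s ≤ t := Iff.rfl
@[simp] theorem b_le_b {s t : Fin l} : (Cml.b s : Cml m l) ≤ Cml.b t ↔ s ≤ t := Iff.rfl
@[simp] theorem not_a_le_b {s : Fin m} {t : Fin l} : ¬ (Cml.a s : Cml m l) ≤ Cml.b t := fun h => h
@[simp] theorem not_b_le_a {s : Fin l} {t : Fin m} : ¬ (Cml.b s : Cml m l) ≤ Cml.a t := fun h => h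
@[simp] theorem not_a_le_bot {s : Fin m} : ¬ (Cml.a s : Cml m l) ≤ Cml.bot := fun h => h
@[simp] theorem not_b_le_bot {s : Fin l} : ¬ (Cml.b s : Cml m l) ≤ Cml.bot := fun h => h
@[simp] theorem not_top_le_a {s : Fin m} : ¬ (Cml.top : Cml m l) ≤ Cml.a s := fun h => h
@[simp] theorem not_top_le_b {s : Fin l} : ¬ (Cml.top : Cml m l) ≤ Cml.b s := fun h => h
@[simp] theorem not_top_le_bot : ¬ (Cml.top : Cml m l) ≤ Cml.bot := fun h => h
@[simp] theorem a_le_top {s : Fin m} : (Cml.a s : Cml m l) ≤ Cml.top := trivial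
@[simp] theorem b_le_top {s : Fin l} : (Cml.b s : Cml m l) ≤ Cml.top := trivial

def toSum : Cml m l → (Fin m ⊕ Fin l) ⊕ Bool
  | .bot => .inr false
  | .a i => .inl (.inl i)
  | .b i => .inl (.inr i)
  | .top => .inr true

def ofSum : (Fin m ⊕ Fin l) ⊕ Bool → Cml m l
  | .inr false => .bot
  | .inl (.inl i) => .a i
  | .inl (.inr i) => .b i
  | .inr true => .top

def equivSum : Cml m l ≃ (Fin m ⊕ Fin l) ⊕ Bool where
  toFun := toSum
  invFun := ofSum
  left_inv x := by cases x <;> rfl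
  right_inv x := by rcases x with (i|i)|(_|_) <;> first | rfl | (cases i <;> rfl)

instance : Fintype (Cml m l) := Fintype.ofEquiv _ equivSum.symm

end Cml


/-! ## IsZero and dimension facts -/

section ZeroFacts
variable {k : Type} [Field k]

theorem moduleCat_eq_zero_of_isZero {X : ModuleCat.{0} k} (h : IsZero X) (z : X) : z = 0 := by
  have h1 : (𝟙 X : X ⟶ X).hom = 0 := by
    have := h.eq_of_src (𝟙 X) 0
    rw [this]; rfl
  calc z = (𝟙 X : X ⟶ X).hom z := rfl
  _ = 0 := by rw [h1]; rfl

theorem moduleCat_isZero_of_forall {X : ModuleCat.{0} k} (h : ∀ z : X, z = 0) : IsZero X := by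
  have : Subsingleton X := ⟨fun a b => by rw [h a, h b]⟩
  exact ModuleCat.isZero_of_subsingleton X

variable {P : Type} [PartialOrder P]

theorem exists_ne_zero_of_not_isZero {M : P ⥤ ModuleCat.{0} k} (h : ¬ IsZero M) :
    ∃ (p : P) (z : M.obj p), z ≠ 0 := by
  by_contra hc
  push_neg at hc
  apply h
  rw [Functor.isZero_iff]
  intro p
  exact moduleCat_isZero_of_forall (fun z => hc p z)

open Classical in
theorem intervalModule_not_isZero (S : Set P) (hne : S.Nonempty) (hconv : IsConvex S) :
    ¬ IsZero (intervalModule k S hconv) := by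
  intro h
  rw [Functor.isZero_iff] at h
  obtain ⟨p0, hp0⟩ := hne
  have hz := moduleCat_eq_zero_of_isZero (h p0)
    (⟨1, by simp [hp0]⟩ : ↥(if p0 ∈ S then (⊤ : Submodule k k) else ⊥))
  have : (1 : k) = 0 := congrArg Subtype.val hz
  exact one_ne_zero this

end ZeroFacts

/-! ## Total dimension and the main induction -/

section MainInduction
variable {k : Type} [Field k] {m l : ℕ}

/-- Total dimension of a persistence module over `Cml m l`. -/
noncomputable def tdim (M : Cml m l ⥤ ModuleCat.{0} k) : ℕ :=
  ∑ p : Cml m l, Module.finrank k (M.obj p)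

theorem tdim_Nfun_lt {M : Cml m l ⥤ ModuleCat.{0} k} (hfin : PointwiseFinite k M)
    (D : SplitData k M) : tdim D.Nfun < tdim M := by
  apply Finset.sum_lt_sum
  · intro p _
    haveI := hfin p
    exact Submodule.finrank_le _
  · obtain ⟨p0, hp0⟩ := D.hS.1
    refine ⟨p0, Finset.mem_univ _, ?_⟩
    haveI := hfin p0
    show Module.finrank k ↥(LinearMap.ker (D.lam p0)) < Module.finrank k (M.obj p0)
    have hne : LinearMap.ker (D.lam p0) ≠ ⊤ := by
      intro htop
      have hx : D.x p0 ∈ LinearMap.ker (D.lam p0) := htop ▸ Submodule.mem_top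
      have h1 := LinearMap.mem_ker.mp hx
      rw [D.pair p0 hp0] at h1
      exact one_ne_zero h1
    exact Submodule.finrank_lt hne

theorem pointwiseFinite_Nfun {M : Cml m l ⥤ ModuleCat.{0} k} (hfin : PointwiseFinite k M)
    (D : SplitData k M) : PointwiseFinite k D.Nfun := by
  intro p
  haveI := hfin p
  show FiniteDimensional k ↥(LinearMap.ker (D.lam p))
  infer_instance

theorem isZero_of_tdim_zero {M : Cml m l ⥤ ModuleCat.{0} k} (hfin : PointwiseFinite k M)
    (h : tdim M = 0) : IsZero M := by
  rw [Functor.isZero_iff]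
  intro p
  have hr : Module.finrank k (M.obj p) = 0 :=
    Finset.sum_eq_zero_iff.mp h p (Finset.mem_univ p)
  haveI := hfin p
  haveI : Subsingleton (M.obj p) := Module.finrank_zero_iff.mp hr
  exact ModuleCat.isZero_of_subsingleton _

/-! ## Interval subsets of Cml -/

section IntervalSets
variable {m l : ℕ}

namespace Cml

/-- Downward-closed interval `{bot} ∪ {a_t | t < ia} ∪ {b_t | t < jb}`. -/
def Dset (ia jb : ℕ) : Set (Cml m l) := fun p =>
  match p with
  | .bot => True
  | .a t => (t : ℕ) < ia
  | .b t => (t : ℕ) < jb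
  | .top => False

/-- Upward-closed interval `{a_t | ia ≤ t} ∪ {b_t | jb ≤ t} ∪ {top}`. -/
def Uset (ia jb : ℕ) : Set (Cml m l) := fun p =>
  match p with
  | .bot => False
  | .a t => ia ≤ (t : ℕ)
  | .b t => jb ≤ (t : ℕ)
  | .top => True

/-- A segment of the `a`-chain. -/
def Aset (lo hi : ℕ) : Set (Cml m l) := fun p =>
  match p with
  | .a t => lo ≤ (t : ℕ) ∧ (t : ℕ) ≤ hi
  | _ => False

/-- A segment of the `b`-chain. -/
def Bset (lo hi : ℕ) : Set (Cml m l) := fun p =>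
  match p with
  | .b t => lo ≤ (t : ℕ) ∧ (t : ℕ) ≤ hi
  | _ => False

theorem zigzag_via {P : Type} [PartialOrder P] {S : Set P} (c : S)
    (hc : ∀ p : S, ((c : P) ≤ p ∨ (p : P) ≤ c)) (x y : S) : ZigzagConnIn S x y := by
  refine Relation.ReflTransGen.head (b := c) ?_ (Relation.ReflTransGen.single ?_)
  · exact (hc x).elim Or.inr Or.inl
  · exact hc y

theorem isInterval_univ : IsIntervalSet (Set.univ : Set (Cml m l)) := by
  refine ⟨⟨.bot, trivial⟩, fun x y z _ _ _ _ => trivial, ?_⟩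
  exact zigzag_via ⟨.bot, trivial⟩ (fun p => Or.inl (bot_le' _))

theorem isInterval_Dset (ia jb : ℕ) : IsIntervalSet (Dset ia jb : Set (Cml m l)) := by
  have hdown : ∀ (z y : Cml m l), z ≤ y → y ∈ Dset ia jb → z ∈ Dset ia jb := by
    intro z y hzy hy
    cases z with
    | bot => trivial
    | a t => cases y with
      | bot => exact absurd hzy not_a_le_bot
      | a t' => exact lt_of_le_of_lt (show (t:ℕ) ≤ (t':ℕ) from a_le_a.mp hzy) (show (t':ℕ) < ia from hy)
      | b t' => exact absurd hzy not_a_le_b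
      | top => exact absurd hy id
    | b t => cases y with
      | bot => exact absurd hzy not_b_le_bot
      | a t' => exact absurd hzy not_b_le_a
      | b t' => exact lt_of_le_of_lt (show (t:ℕ) ≤ (t':ℕ) from b_le_b.mp hzy) (show (t':ℕ) < jb from hy)
      | top => exact absurd hy id
    | top => cases y with
      | bot => exact absurd hzy not_top_le_bot
      | a t' => exact absurd hzy not_top_le_a
      | b t' => exact absurd hzy not_top_le_b
      | top => exact absurd hy id
  refine ⟨⟨.bot, trivial⟩, fun x y z _ hy hxz hzy => hdown z y hzy hy, ?_⟩
  exact zigzag_via ⟨.bot, trivial⟩ (fun p => Or.inl (bot_le' _))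

theorem isInterval_Uset (ia jb : ℕ) : IsIntervalSet (Uset ia jb : Set (Cml m l)) := by
  have hup : ∀ (z y : Cml m l), y ≤ z → y ∈ Uset ia jb → z ∈ Uset ia jb := by
    intro z y hyz hy
    cases y with
    | bot => exact absurd hy id
    | a t => cases z with
      | bot => exact absurd hyz not_a_le_bot
      | a t' => exact le_trans (show ia ≤ (t:ℕ) from hy) (show (t:ℕ) ≤ (t':ℕ) from a_le_a.mp hyz)
      | b t' => exact absurd hyz not_a_le_b
      | top => trivial
    | b t => cases z with
      | bot => exact absurd hyz not_b_le_bot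
      | a t' => exact absurd hyz not_b_le_a
      | b t' => exact le_trans (show jb ≤ (t:ℕ) from hy) (show (t:ℕ) ≤ (t':ℕ) from b_le_b.mp hyz)
      | top => trivial
    | top => cases z with
      | bot => exact absurd hyz not_top_le_bot
      | a t' => exact absurd hyz not_top_le_a
      | b t' => exact absurd hyz not_top_le_b
      | top => trivial
  refine ⟨⟨.top, trivial⟩, fun x y z hx _ hxz _ => hup z x hxz hx, ?_⟩
  exact zigzag_via ⟨.top, trivial⟩ (fun p => Or.inr (le_top' _))

theorem isInterval_Aset (lo hi : Fin m) (hlh : lo ≤ hi) :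
    IsIntervalSet (Aset (lo : ℕ) (hi : ℕ) : Set (Cml m l)) := by
  refine ⟨⟨.a lo, ⟨le_rfl, hlh⟩⟩, ?_, ?_⟩
  · intro x y z hx hy hxz hzy
    cases x with
    | a s =>
      cases z with
      | bot => exact absurd hxz not_a_le_bot
      | a r =>
        cases y with
        | a s' => exact ⟨le_trans hx.1 (show (s:ℕ) ≤ (r:ℕ) from a_le_a.mp hxz), le_trans (show (r:ℕ) ≤ (s':ℕ) from a_le_a.mp hzy) hy.2⟩
        | bot => exact absurd hy id
        | b _ => exact absurd hy id
        | top => exact absurd hy id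
      | b t => exact absurd hxz not_a_le_b
      | top =>
        cases y with
        | a s' => exact absurd hzy not_top_le_a
        | bot => exact absurd hy id
        | b _ => exact absurd hy id
        | top => exact absurd hy id
    | bot => exact absurd hx id
    | b _ => exact absurd hx id
    | top => exact absurd hx id
  · rintro ⟨x, hx⟩ ⟨y, hy⟩
    apply Relation.ReflTransGen.single
    cases x with
    | a s => cases y with
      | a s' =>
        show Cml.a s ≤ Cml.a s' ∨ Cml.a s' ≤ Cml.a s
        rcases le_total s s' with h | h
        · exact Or.inl h
        · exact Or.inr h
      | bot => exact absurd hy id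
      | b _ => exact absurd hy id
      | top => exact absurd hy id
    | bot => exact absurd hx id
    | b _ => exact absurd hx id
    | top => exact absurd hx id

theorem isInterval_Bset (lo hi : Fin l) (hlh : lo ≤ hi) :
    IsIntervalSet (Bset (lo : ℕ) (hi : ℕ) : Set (Cml m l)) := by
  refine ⟨⟨.b lo, ⟨le_rfl, hlh⟩⟩, ?_, ?_⟩
  · intro x y z hx hy hxz hzy
    cases x with
    | b s =>
      cases z with
      | bot => exact absurd hxz not_b_le_bot
      | b r =>
        cases y with
        | b s' => exact ⟨le_trans hx.1 (show (s:ℕ) ≤ (r:ℕ) from b_le_b.mp hxz), le_trans (show (r:ℕ) ≤ (s':ℕ) from b_le_b.mp hzy) hy.2⟩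
        | bot => exact absurd hy id
        | a _ => exact absurd hy id
        | top => exact absurd hy id
      | a t => exact absurd hxz not_b_le_a
      | top =>
        cases y with
        | b s' => exact absurd hzy not_top_le_b
        | bot => exact absurd hy id
        | a _ => exact absurd hy id
        | top => exact absurd hy id
    | bot => exact absurd hx id
    | a _ => exact absurd hx id
    | top => exact absurd hx id
  · rintro ⟨x, hx⟩ ⟨y, hy⟩
    apply Relation.ReflTransGen.single
    cases x with
    | b s => cases y with
      | b s' =>
        show Cml.b s ≤ Cml.b s' ∨ Cml.b s' ≤ Cml.b s
        rcases le_total s s' with h | h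
        · exact Or.inl h
        · exact Or.inr h
      | bot => exact absurd hy id
      | a _ => exact absurd hy id
      | top => exact absurd hy id
    | bot => exact absurd hx id
    | a _ => exact absurd hx id
    | top => exact absurd hx id

end Cml

end IntervalSets

/-! ## Transition map helpers -/

section Transition
variable {k : Type} [Field k] {m l : ℕ} (M : Cml m l ⥤ ModuleCat.{0} k)

theorem map_map {p q r : Cml m l} (h1 : p ≤ q) (h2 : q ≤ r) (z : M.obj p) :
    M.map (homOfLE h2) (M.map (homOfLE h1) z) = M.map (homOfLE (le_trans h1 h2)) z := by
  rw [← homOfLE_comp h1 h2, M.map_comp]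
  rfl

theorem map_self {p : Cml m l} (h : p ≤ p) (z : M.obj p) : M.map (homOfLE h) z = z := by
  rw [show homOfLE h = 𝟙 p from rfl, M.map_id]
  rfl

theorem map_proof_irrel {p q : Cml m l} (h h' : p ≤ q) (z : M.obj p) :
    M.map (homOfLE h) z = M.map (homOfLE h') z := rfl

end Transition

/-! ## Linear algebra helpers -/

section LinAlgHelpers
variable {k : Type} [Field k] {E : Type} [AddCommGroup E] [Module k E]

theorem exists_dual_of_not_mem (V : Submodule k E) {z : E} (hz : z ∉ V) :
    ∃ f : E →ₗ[k] k, f z = 1 ∧ ∀ v ∈ V, f v = 0 := by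
  have hz' : (Submodule.Quotient.mk z : E ⧸ V) ≠ 0 := by
    simpa [Submodule.Quotient.mk_eq_zero] using hz
  obtain ⟨C, hC⟩ := (Submodule.span k {(Submodule.Quotient.mk z : E ⧸ V)}).exists_isCompl
  set zb : E ⧸ V := Submodule.Quotient.mk z with hzb
  let proj := Submodule.linearProjOfIsCompl _ _ hC
  let e := LinearEquiv.toSpanNonzeroSingleton k (E ⧸ V) zb hz'
  refine ⟨(e.symm.toLinearMap.comp proj).comp V.mkQ, ?_, ?_⟩
  · have h1 : proj zb = ⟨zb, Submodule.mem_span_singleton_self zb⟩ := by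
      have := Submodule.linearProjOfIsCompl_apply_left hC
        (⟨zb, Submodule.mem_span_singleton_self zb⟩ : Submodule.span k {zb})
      exact this
    have h2 : e 1 = ⟨zb, Submodule.mem_span_singleton_self zb⟩ := by
      apply Subtype.ext
      simp [e, LinearEquiv.toSpanNonzeroSingleton_apply]
    simp only [LinearMap.comp_apply]
    show e.symm (proj (V.mkQ z)) = 1
    have : V.mkQ z = zb := rfl
    rw [this, h1, ← h2, LinearEquiv.symm_apply_apply]
  · intro v hv
    simp only [LinearMap.comp_apply]
    show e.symm (proj (V.mkQ v)) = 0
    have : V.mkQ v = 0 := by simpa [Submodule.Quotient.mk_eq_zero] using hv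
    rw [this, map_zero, map_zero]

variable {A B W : Type} [AddCommGroup A] [Module k A] [AddCommGroup B] [Module k B]
  [AddCommGroup W] [Module k W]

theorem exists_dual_extend (s : A →ₗ[k] W) (t : B →ₗ[k] W) (lam : W →ₗ[k] k)
    (hI : ∀ y z, s y = t z → lam (s y) = 0) :
    ∃ mu : W →ₗ[k] k, (∀ z, mu (t z) = 0) ∧ (∀ y, mu (s y) = lam (s y)) := by
  set h : A × B →ₗ[k] W := s.coprod t with hh
  set f : A × B →ₗ[k] k := lam.comp (s.comp (LinearMap.fst k A B)) with hf
  have hker : LinearMap.ker h ≤ LinearMap.ker f := by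
    rintro ⟨y, z⟩ hyz
    have h0 : s y + t z = 0 := hyz
    have : s y = t (-z) := by rw [map_neg]; exact eq_neg_of_add_eq_zero_left h0
    exact hI y (-z) this
  obtain ⟨C, hC⟩ := (LinearMap.range h).exists_isCompl
  let proj := Submodule.linearProjOfIsCompl _ _ hC
  let e := LinearMap.quotKerEquivRange h
  let fbar := (LinearMap.ker h).liftQ f hker
  let g : LinearMap.range h →ₗ[k] k := fbar.comp e.symm.toLinearMap
  have hg : ∀ x : A × B, g ⟨h x, LinearMap.mem_range_self h x⟩ = f x := by
    intro x
    show fbar (e.symm ⟨h x, _⟩) = f x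
    rw [LinearMap.quotKerEquivRange_symm_apply_image]
    exact Submodule.liftQ_apply _ f x
  have hproj : ∀ (w : W) (hw : w ∈ LinearMap.range h), proj w = ⟨w, hw⟩ := by
    intro w hw
    have := Submodule.linearProjOfIsCompl_apply_left hC (⟨w, hw⟩ : LinearMap.range h)
    exact this
  refine ⟨g.comp proj, ?_, ?_⟩
  · intro z
    have hmem : t z ∈ LinearMap.range h := ⟨(0, z), by simp [h]⟩
    show g (proj (t z)) = 0
    rw [hproj _ hmem]
    have : (⟨t z, hmem⟩ : LinearMap.range h) = ⟨h (0, z), LinearMap.mem_range_self h (0, z)⟩ := by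
      apply Subtype.ext; simp [h]
    rw [this, hg]
    simp [f]
  · intro y
    have hmem : s y ∈ LinearMap.range h := ⟨(y, 0), by simp [h]⟩
    show g (proj (s y)) = lam (s y)
    rw [hproj _ hmem]
    have : (⟨s y, hmem⟩ : LinearMap.range h) = ⟨h (y, 0), LinearMap.mem_range_self h (y, 0)⟩ := by
      apply Subtype.ext; simp [h]
    rw [this, hg]
    simp [f]

end LinAlgHelpers

/-! ## Factorization helpers -/

section Factor
variable {k : Type} [Field k] {m l : ℕ} (M : Cml m l ⥤ ModuleCat.{0} k)

theorem map_eq_trans {p q r : Cml m l} (h1 : p ≤ q) (h2 : q ≤ r) (hpr : p ≤ r) (z : M.obj p) :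
    M.map (homOfLE hpr) z = M.map (homOfLE h2) (M.map (homOfLE h1) z) :=
  (map_map M h1 h2 z).symm

theorem map_factor_zero {p q r : Cml m l} (h1 : p ≤ q) (h2 : q ≤ r) (hpr : p ≤ r)
    (z : M.obj p) (h0 : M.map (homOfLE h1) z = 0) : M.map (homOfLE hpr) z = 0 := by
  rw [map_eq_trans M h1 h2 hpr z, h0, map_zero]

theorem comp_factor_zero {p q r : Cml m l} (h1 : p ≤ q) (h2 : q ≤ r) (hpr : p ≤ r)
    (f : M.obj r →ₗ[k] k) (h0 : f.comp (M.map (homOfLE h2)).hom = 0) :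
    f.comp (M.map (homOfLE hpr)).hom = 0 := by
  apply LinearMap.ext
  intro z
  show f (M.map (homOfLE hpr) z) = 0
  rw [map_eq_trans M h1 h2 hpr z]
  have : f (M.map (homOfLE h2) (M.map (homOfLE h1) z))
      = f.comp (M.map (homOfLE h2)).hom (M.map (homOfLE h1) z) := rfl
  rw [this, h0]
  rfl

end Factor

/-! ## The case lemmas -/

section Cases
variable {k : Type} [Field k] {m l : ℕ} (M : Cml m l ⥤ ModuleCat.{0} k)

/-- Case A1: an element of `M(bot)` surviving to `M(top)`: the full interval splits. -/
theorem caseA1 (x0 : M.obj .bot)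
    (hx : M.map (homOfLE (Cml.bot_le' .top)) x0 ≠ 0) :
    Nonempty (SplitData k M) := by
  obtain ⟨f, hf1, -⟩ := exists_dual_of_not_mem (⊥ : Submodule k (M.obj .top))
    (by simpa using hx)
  refine ⟨{
    S := Set.univ
    hS := Cml.isInterval_univ
    x := fun p => M.map (homOfLE (Cml.bot_le' p)) x0
    lam := fun p => f.comp (M.map (homOfLE (Cml.le_top' p))).hom
    x_zero := fun p hp => absurd trivial hp
    lam_zero := fun p hp => absurd trivial hp
    pair := ?_
    x_nat := ?_
    lam_nat := ?_ }⟩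
  · intro p _
    show f (M.map (homOfLE (Cml.le_top' p)) (M.map (homOfLE (Cml.bot_le' p)) x0)) = 1
    rw [map_map]
    exact hf1
  · intro p q h _
    exact map_map M (Cml.bot_le' p) h x0
  · intro p q h _
    apply LinearMap.ext
    intro z
    show f (M.map (homOfLE (Cml.le_top' q)) (M.map (homOfLE h) z))
        = f (M.map (homOfLE (Cml.le_top' p)) z)
    rw [map_map]

/-- Case A2: an element of `M(bot)` dying immediately: the interval `{bot}` splits. -/
theorem caseA2 (hm : 0 < m) (hl : 0 < l) (x0 : M.obj .bot) (hx0 : x0 ≠ 0)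
    (ha : M.map (homOfLE (Cml.bot_le' (.a ⟨0, hm⟩))) x0 = 0)
    (hb : M.map (homOfLE (Cml.bot_le' (.b ⟨0, hl⟩))) x0 = 0) :
    Nonempty (SplitData k M) := by
  obtain ⟨f, hf1, -⟩ := exists_dual_of_not_mem (⊥ : Submodule k (M.obj .bot))
    (by simpa using hx0)
  have ha' : ∀ t : Fin m, M.map (homOfLE (Cml.bot_le' (.a t))) x0 = 0 := fun t =>
    map_factor_zero M (Cml.bot_le' (.a ⟨0, hm⟩)) (show (Cml.a ⟨0, hm⟩ : Cml m l) ≤ .a t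
      from Nat.zero_le _) _ x0 ha
  have hb' : ∀ t : Fin l, M.map (homOfLE (Cml.bot_le' (.b t))) x0 = 0 := fun t =>
    map_factor_zero M (Cml.bot_le' (.b ⟨0, hl⟩)) (show (Cml.b ⟨0, hl⟩ : Cml m l) ≤ .b t
      from Nat.zero_le _) _ x0 hb
  have htop : M.map (homOfLE (Cml.bot_le' .top)) x0 = 0 :=
    map_factor_zero M (Cml.bot_le' (.a ⟨0, hm⟩)) (Cml.le_top' _) _ x0 ha
  refine ⟨{
    S := Cml.Dset 0 0
    hS := Cml.isInterval_Dset 0 0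
    x := fun p => match p with
      | .bot => x0
      | .a _ => 0
      | .b _ => 0
      | .top => 0
    lam := fun p => match p with
      | .bot => f
      | _ => 0
    x_zero := ?_
    lam_zero := ?_
    pair := ?_
    x_nat := ?_
    lam_nat := ?_ }⟩
  · intro p hp
    cases p with
    | bot => exact absurd trivial hp
    | a t => rfl
    | b t => rfl
    | top => rfl
  · intro p hp
    cases p with
    | bot => exact absurd trivial hp
    | a t => rfl
    | b t => rfl
    | top => rfl
  · intro p hp
    cases p with
    | bot => exact hf1
    | a t => exact absurd hp (Nat.not_lt_zero _)
    | b t => exact absurd hp (Nat.not_lt_zero _)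
    | top => exact hp.elim
  · intro p q h hp
    cases p with
    | bot =>
      cases q with
      | bot => exact map_self M h x0
      | a t => exact ha' t
      | b t => exact hb' t
      | top => exact htop
    | a t => exact absurd hp (Nat.not_lt_zero _)
    | b t => exact absurd hp (Nat.not_lt_zero _)
    | top => exact hp.elim
  · intro p q h hq
    cases q with
    | bot =>
      cases p with
      | bot =>
        apply LinearMap.ext
        intro z
        show f (M.map (homOfLE h) z) = f z
        rw [map_self M h z]
      | a t => exact absurd h Cml.not_a_le_bot
      | b t => exact absurd h Cml.not_b_le_bot
      | top => exact absurd h Cml.not_top_le_bot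
    | a t => exact absurd hq (Nat.not_lt_zero _)
    | b t => exact absurd hq (Nat.not_lt_zero _)
    | top => exact hq.elim

open Classical in
theorem exists_maxB (hl : 0 < l) (z : M.obj .bot)
    (hz : M.map (homOfLE (Cml.bot_le' (.b ⟨0, hl⟩))) z ≠ 0) :
    ∃ j : Fin l, (M.map (homOfLE (Cml.bot_le' (.b j))) z ≠ 0) ∧
      ∀ t : Fin l, j < t → M.map (homOfLE (Cml.bot_le' (.b t))) z = 0 := by
  set F := Finset.univ.filter
    (fun t : Fin l => M.map (homOfLE (Cml.bot_le' (.b t))) z ≠ 0) with hF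
  have hFne : F.Nonempty := ⟨⟨0, hl⟩, Finset.mem_filter.mpr ⟨Finset.mem_univ _, hz⟩⟩
  refine ⟨F.max' hFne, (Finset.mem_filter.mp (F.max'_mem hFne)).2, ?_⟩
  intro t ht
  by_contra hne
  exact absurd (F.le_max' t (Finset.mem_filter.mpr ⟨Finset.mem_univ _, hne⟩)) (not_le.mpr ht)

open Classical in
theorem exists_maxA (hm : 0 < m) (z : M.obj .bot)
    (hz : M.map (homOfLE (Cml.bot_le' (.a ⟨0, hm⟩))) z ≠ 0) :
    ∃ j : Fin m, (M.map (homOfLE (Cml.bot_le' (.a j))) z ≠ 0) ∧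
      ∀ t : Fin m, j < t → M.map (homOfLE (Cml.bot_le' (.a t))) z = 0 := by
  set F := Finset.univ.filter
    (fun t : Fin m => M.map (homOfLE (Cml.bot_le' (.a t))) z ≠ 0) with hF
  have hFne : F.Nonempty := ⟨⟨0, hm⟩, Finset.mem_filter.mpr ⟨Finset.mem_univ _, hz⟩⟩
  refine ⟨F.max' hFne, (Finset.mem_filter.mp (F.max'_mem hFne)).2, ?_⟩
  intro t ht
  by_contra hne
  exact absurd (F.le_max' t (Finset.mem_filter.mpr ⟨Finset.mem_univ _, hne⟩)) (not_le.mpr ht)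

/-- Case A3: an element of `M(bot)` dying on the `a`-side immediately and at `top`,
but surviving along the `b`-chain. -/
theorem caseA3 (hm : 0 < m) (hl : 0 < l) (x0 : M.obj .bot) (hx0 : x0 ≠ 0)
    (ha : M.map (homOfLE (Cml.bot_le' (.a ⟨0, hm⟩))) x0 = 0)
    (htop : M.map (homOfLE (Cml.bot_le' .top)) x0 = 0)
    (hb : M.map (homOfLE (Cml.bot_le' (.b ⟨0, hl⟩))) x0 ≠ 0) :
    Nonempty (SplitData k M) := by
  obtain ⟨j, hj1, hj2⟩ := exists_maxB M hl x0 hb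
  obtain ⟨f, hf1, -⟩ := exists_dual_of_not_mem (⊥ : Submodule k (M.obj (.b j)))
    (by simpa using hj1)
  have ha' : ∀ t : Fin m, M.map (homOfLE (Cml.bot_le' (.a t))) x0 = 0 := fun t =>
    map_factor_zero M (Cml.bot_le' (.a ⟨0, hm⟩)) (show (Cml.a ⟨0, hm⟩ : Cml m l) ≤ .a t
      from Nat.zero_le _) _ x0 ha
  refine ⟨{
    S := Cml.Dset 0 ((j : ℕ) + 1)
    hS := Cml.isInterval_Dset 0 ((j : ℕ) + 1)
    x := fun p => M.map (homOfLE (Cml.bot_le' p)) x0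
    lam := fun p => match p with
      | .bot => f.comp (M.map (homOfLE (Cml.bot_le' (.b j)))).hom
      | .b t => if h : (t : ℕ) ≤ (j : ℕ) then
          f.comp (M.map (homOfLE (show (Cml.b t : Cml m l) ≤ .b j from h))).hom else 0
      | _ => 0
    x_zero := ?_
    lam_zero := ?_
    pair := ?_
    x_nat := ?_
    lam_nat := ?_ }⟩
  · intro p hp
    cases p with
    | bot => exact absurd trivial hp
    | a t => exact ha' t
    | b t =>
      refine hj2 t ?_
      have hh : ¬ ((t:ℕ) < (j:ℕ)+1) := hp
      show (j:ℕ) < (t:ℕ)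
      omega
    | top => exact htop
  · intro p hp
    cases p with
    | bot => exact absurd trivial hp
    | a t => rfl
    | b t => exact dif_neg (by { intro hc; exact hp (by { show (t:ℕ) < (j:ℕ)+1; omega }) })
    | top => rfl
  · intro p hp
    cases p with
    | bot =>
      show f (M.map (homOfLE (Cml.bot_le' (.b j))) (M.map (homOfLE (Cml.bot_le' .bot)) x0)) = 1
      rw [map_map]
      exact hf1
    | a t => exact absurd hp (Nat.not_lt_zero _)
    | b t =>
      have ht : (t : ℕ) ≤ (j : ℕ) := by { have : (t:ℕ) < (j:ℕ)+1 := hp; omega }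
      show (if h : (t : ℕ) ≤ (j : ℕ) then
          f.comp (M.map (homOfLE (show (Cml.b t : Cml m l) ≤ .b j from h))).hom else 0)
          (M.map (homOfLE (Cml.bot_le' (.b t))) x0) = 1
      rw [dif_pos ht]
      show f (M.map (homOfLE (show (Cml.b t : Cml m l) ≤ .b j from ht))
        (M.map (homOfLE (Cml.bot_le' (.b t))) x0)) = 1
      rw [map_map]
      exact hf1
    | top => exact hp.elim
  · intro p q h hp
    exact map_map M (Cml.bot_le' p) h x0
  · intro p q h hq
    cases q with
    | bot =>
      cases p with
      | bot =>
        apply LinearMap.ext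
        intro z
        show f (M.map (homOfLE (Cml.bot_le' (.b j))) (M.map (homOfLE h) z))
            = f (M.map (homOfLE (Cml.bot_le' (.b j))) z)
        rw [map_self M h z]
      | a t => exact absurd h Cml.not_a_le_bot
      | b t => exact absurd h Cml.not_b_le_bot
      | top => exact absurd h Cml.not_top_le_bot
    | a t => exact absurd hq (Nat.not_lt_zero _)
    | b t =>
      have ht : (t : ℕ) ≤ (j : ℕ) := by { have : (t:ℕ) < (j:ℕ)+1 := hq; omega }
      cases p with
      | bot =>
        show (if hh : (t : ℕ) ≤ (j : ℕ) then
            f.comp (M.map (homOfLE (show (Cml.b t : Cml m l) ≤ .b j from hh))).hom else 0).comp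
            (M.map (homOfLE h)).hom
            = f.comp (M.map (homOfLE (Cml.bot_le' (.b j)))).hom
        rw [dif_pos ht]
        apply LinearMap.ext
        intro z
        show f (M.map (homOfLE (show (Cml.b t : Cml m l) ≤ .b j from ht))
          (M.map (homOfLE h) z)) = f (M.map (homOfLE (Cml.bot_le' (.b j))) z)
        rw [map_map]
      | a t' => exact absurd h (fun hh => hh)
      | b t' =>
        have ht' : (t' : ℕ) ≤ (j : ℕ) := le_trans (show (t':ℕ) ≤ (t:ℕ) from h) ht
        show (if hh : (t : ℕ) ≤ (j : ℕ) then
            f.comp (M.map (homOfLE (show (Cml.b t : Cml m l) ≤ .b j from hh))).hom else 0).comp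
            (M.map (homOfLE h)).hom
            = (if hh : (t' : ℕ) ≤ (j : ℕ) then
            f.comp (M.map (homOfLE (show (Cml.b t' : Cml m l) ≤ .b j from hh))).hom else 0)
        rw [dif_pos ht, dif_pos ht']
        apply LinearMap.ext
        intro z
        show f (M.map (homOfLE (show (Cml.b t : Cml m l) ≤ .b j from ht))
          (M.map (homOfLE h) z)) = f (M.map (homOfLE (show (Cml.b t' : Cml m l) ≤ .b j from ht')) z)
        rw [map_map]
      | top => exact absurd h Cml.not_top_le_b
    | top => exact hq.elim

/-- Case A4: mirror of A3 (dying on the `b`-side, surviving along the `a`-chain). -/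
theorem caseA4 (hm : 0 < m) (hl : 0 < l) (x0 : M.obj .bot)
    (hb : M.map (homOfLE (Cml.bot_le' (.b ⟨0, hl⟩))) x0 = 0)
    (htop : M.map (homOfLE (Cml.bot_le' .top)) x0 = 0)
    (ha : M.map (homOfLE (Cml.bot_le' (.a ⟨0, hm⟩))) x0 ≠ 0) :
    Nonempty (SplitData k M) := by
  obtain ⟨j, hj1, hj2⟩ := exists_maxA M hm x0 ha
  obtain ⟨f, hf1, -⟩ := exists_dual_of_not_mem (⊥ : Submodule k (M.obj (.a j)))
    (by simpa using hj1)
  have hb' : ∀ t : Fin l, M.map (homOfLE (Cml.bot_le' (.b t))) x0 = 0 := fun t =>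
    map_factor_zero M (Cml.bot_le' (.b ⟨0, hl⟩)) (show (Cml.b ⟨0, hl⟩ : Cml m l) ≤ .b t
      from Nat.zero_le _) _ x0 hb
  refine ⟨{
    S := Cml.Dset ((j : ℕ) + 1) 0
    hS := Cml.isInterval_Dset ((j : ℕ) + 1) 0
    x := fun p => M.map (homOfLE (Cml.bot_le' p)) x0
    lam := fun p => match p with
      | .bot => f.comp (M.map (homOfLE (Cml.bot_le' (.a j)))).hom
      | .a t => if h : (t : ℕ) ≤ (j : ℕ) then
          f.comp (M.map (homOfLE (show (Cml.a t : Cml m l) ≤ .a j from h))).hom else 0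
      | _ => 0
    x_zero := ?_
    lam_zero := ?_
    pair := ?_
    x_nat := ?_
    lam_nat := ?_ }⟩
  · intro p hp
    cases p with
    | bot => exact absurd trivial hp
    | b t => exact hb' t
    | a t =>
      refine hj2 t ?_
      have hh : ¬ ((t:ℕ) < (j:ℕ)+1) := hp
      show (j:ℕ) < (t:ℕ)
      omega
    | top => exact htop
  · intro p hp
    cases p with
    | bot => exact absurd trivial hp
    | b t => rfl
    | a t => exact dif_neg (by { intro hc; exact hp (by { show (t:ℕ) < (j:ℕ)+1; omega }) })
    | top => rfl
  · intro p hp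
    cases p with
    | bot =>
      show f (M.map (homOfLE (Cml.bot_le' (.a j))) (M.map (homOfLE (Cml.bot_le' .bot)) x0)) = 1
      rw [map_map]
      exact hf1
    | b t => exact absurd hp (Nat.not_lt_zero _)
    | a t =>
      have ht : (t : ℕ) ≤ (j : ℕ) := by { have : (t:ℕ) < (j:ℕ)+1 := hp; omega }
      show (if h : (t : ℕ) ≤ (j : ℕ) then
          f.comp (M.map (homOfLE (show (Cml.a t : Cml m l) ≤ .a j from h))).hom else 0)
          (M.map (homOfLE (Cml.bot_le' (.a t))) x0) = 1
      rw [dif_pos ht]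
      show f (M.map (homOfLE (show (Cml.a t : Cml m l) ≤ .a j from ht))
        (M.map (homOfLE (Cml.bot_le' (.a t))) x0)) = 1
      rw [map_map]
      exact hf1
    | top => exact hp.elim
  · intro p q h hp
    exact map_map M (Cml.bot_le' p) h x0
  · intro p q h hq
    cases q with
    | bot =>
      cases p with
      | bot =>
        apply LinearMap.ext
        intro z
        show f (M.map (homOfLE (Cml.bot_le' (.a j))) (M.map (homOfLE h) z))
            = f (M.map (homOfLE (Cml.bot_le' (.a j))) z)
        rw [map_self M h z]
      | a t => exact absurd h Cml.not_a_le_bot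
      | b t => exact absurd h Cml.not_b_le_bot
      | top => exact absurd h Cml.not_top_le_bot
    | b t => exact absurd hq (Nat.not_lt_zero _)
    | a t =>
      have ht : (t : ℕ) ≤ (j : ℕ) := by { have : (t:ℕ) < (j:ℕ)+1 := hq; omega }
      cases p with
      | bot =>
        show (if hh : (t : ℕ) ≤ (j : ℕ) then
            f.comp (M.map (homOfLE (show (Cml.a t : Cml m l) ≤ .a j from hh))).hom else 0).comp
            (M.map (homOfLE h)).hom
            = f.comp (M.map (homOfLE (Cml.bot_le' (.a j)))).hom
        rw [dif_pos ht]
        apply LinearMap.ext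
        intro z
        show f (M.map (homOfLE (show (Cml.a t : Cml m l) ≤ .a j from ht))
          (M.map (homOfLE h) z)) = f (M.map (homOfLE (Cml.bot_le' (.a j))) z)
        rw [map_map]
      | b t' => exact absurd h (fun hh => hh)
      | a t' =>
        have ht' : (t' : ℕ) ≤ (j : ℕ) := le_trans (show (t':ℕ) ≤ (t:ℕ) from h) ht
        show (if hh : (t : ℕ) ≤ (j : ℕ) then
            f.comp (M.map (homOfLE (show (Cml.a t : Cml m l) ≤ .a j from hh))).hom else 0).comp
            (M.map (homOfLE h)).hom
            = (if hh : (t' : ℕ) ≤ (j : ℕ) then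
            f.comp (M.map (homOfLE (show (Cml.a t' : Cml m l) ≤ .a j from hh))).hom else 0)
        rw [dif_pos ht, dif_pos ht']
        apply LinearMap.ext
        intro z
        show f (M.map (homOfLE (show (Cml.a t : Cml m l) ≤ .a j from ht))
          (M.map (homOfLE h) z)) = f (M.map (homOfLE (show (Cml.a t' : Cml m l) ≤ .a j from ht')) z)
        rw [map_map]
      | top => exact absurd h Cml.not_top_le_a
    | top => exact hq.elim

/-- Case A5: every nonzero element of `M(bot)` survives into both chains but dies at top. -/
theorem caseA5 (hm : 0 < m) (hl : 0 < l) (x0 : M.obj .bot) (hx0 : x0 ≠ 0)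
    (htop : ∀ z : M.obj .bot, M.map (homOfLE (Cml.bot_le' .top)) z = 0)
    (hall : ∀ z : M.obj .bot, z ≠ 0 →
      M.map (homOfLE (Cml.bot_le' (.a ⟨0, hm⟩))) z ≠ 0 ∧
      M.map (homOfLE (Cml.bot_le' (.b ⟨0, hl⟩))) z ≠ 0) :
    Nonempty (SplitData k M) := by
  classical
  -- the set of "maximal b-death indices" of nonzero elements
  set Fj := Finset.univ.filter (fun jj : Fin l => ∃ z : M.obj .bot, z ≠ 0 ∧
    M.map (homOfLE (Cml.bot_le' (.b jj))) z ≠ 0 ∧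
    ∀ t : Fin l, jj < t → M.map (homOfLE (Cml.bot_le' (.b t))) z = 0) with hFj
  have hFjne : Fj.Nonempty := by
    obtain ⟨j0, hj01, hj02⟩ := exists_maxB M hl x0 (hall x0 hx0).2
    exact ⟨j0, Finset.mem_filter.mpr ⟨Finset.mem_univ _, x0, hx0, hj01, hj02⟩⟩
  set jstar := Fj.min' hFjne with hjstar
  obtain ⟨z0, hz0, hzb1, hzb2⟩ := (Finset.mem_filter.mp (Fj.min'_mem hFjne)).2
  -- minimality: every nonzero element of M(bot) survives to b jstar
  have hminB : ∀ y : M.obj .bot, y ≠ 0 → M.map (homOfLE (Cml.bot_le' (.b jstar))) y ≠ 0 := by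
    intro y hy hcontra
    obtain ⟨jy, hjy1, hjy2⟩ := exists_maxB M hl y (hall y hy).2
    have hjymem : jy ∈ Fj := Finset.mem_filter.mpr ⟨Finset.mem_univ _, y, hy, hjy1, hjy2⟩
    have hjylt : jy < jstar := by
      rcases lt_or_ge jy jstar with h | h
      · exact h
      · exact absurd (map_factor_zero M (Cml.bot_le' (.b jstar))
          (show (Cml.b jstar : Cml m l) ≤ .b jy from h) _ y hcontra) hjy1
    exact absurd (Fj.min'_le jy hjymem) (not_le.mpr hjylt)
  obtain ⟨istar, hza1, hza2⟩ := exists_maxA M hm z0 (hall z0 hz0).1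
  -- the functional
  set Ta : M.obj .bot →ₗ[k] M.obj (.a istar) := (M.map (homOfLE (Cml.bot_le' (.a istar)))).hom
    with hTa
  set Tb : M.obj .bot →ₗ[k] M.obj (.b jstar) := (M.map (homOfLE (Cml.bot_le' (.b jstar)))).hom
    with hTb
  set Phi : M.obj .bot →ₗ[k] (M.obj (.a istar)) × (M.obj (.b jstar)) := Ta.prod Tb with hPhi
  have hnotmem : ((Ta z0, 0) : (M.obj (.a istar)) × (M.obj (.b jstar))) ∉ LinearMap.range Phi := by
    rintro ⟨y, hy⟩
    have h1 : Ta y = Ta z0 := congrArg Prod.fst hy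
    have h2 : Tb y = 0 := congrArg Prod.snd hy
    have hyne : y ≠ 0 := by
      intro h0
      rw [h0, map_zero] at h1
      exact hza1 h1.symm
    exact hminB y hyne h2
  obtain ⟨F, hF1, hF0⟩ := exists_dual_of_not_mem _ hnotmem
  set lamA : M.obj (.a istar) →ₗ[k] k := F.comp (LinearMap.inl k _ _) with hlamA
  set lamB : M.obj (.b jstar) →ₗ[k] k := -(F.comp (LinearMap.inr k _ _)) with hlamB
  have c1 : ∀ y : M.obj .bot, lamA (Ta y) = lamB (Tb y) := by
    intro y
    have h0 : F (Phi y) = 0 := hF0 _ ⟨y, rfl⟩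
    have hsplit : (Phi y : (M.obj (.a istar)) × (M.obj (.b jstar)))
        = (Ta y, 0) + (0, Tb y) := by
      apply Prod.ext <;> simp [hPhi]
    rw [hsplit, map_add] at h0
    have : F (Ta y, 0) + F (0, Tb y) = 0 := h0
    show F (Ta y, 0) = -(F (0, Tb y))
    exact eq_neg_of_add_eq_zero_left this
  have c2 : lamA (Ta z0) = 1 := hF1
  have c3 : lamB (Tb z0) = 1 := by rw [← c1 z0]; exact c2
  refine ⟨{
    S := Cml.Dset ((istar : ℕ) + 1) ((jstar : ℕ) + 1)
    hS := Cml.isInterval_Dset _ _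
    x := fun p => M.map (homOfLE (Cml.bot_le' p)) z0
    lam := fun p => match p with
      | .bot => lamA.comp (M.map (homOfLE (Cml.bot_le' (.a istar)))).hom
      | .a t => if h : (t : ℕ) ≤ (istar : ℕ) then
          lamA.comp (M.map (homOfLE (show (Cml.a t : Cml m l) ≤ .a istar from h))).hom else 0
      | .b t => if h : (t : ℕ) ≤ (jstar : ℕ) then
          lamB.comp (M.map (homOfLE (show (Cml.b t : Cml m l) ≤ .b jstar from h))).hom else 0
      | .top => 0
    x_zero := ?_
    lam_zero := ?_
    pair := ?_
    x_nat := ?_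
    lam_nat := ?_ }⟩
  · intro p hp
    cases p with
    | bot => exact absurd trivial hp
    | a t =>
      refine hza2 t ?_
      have hh : ¬ ((t:ℕ) < (istar:ℕ)+1) := hp
      show (istar:ℕ) < (t:ℕ)
      omega
    | b t =>
      refine hzb2 t ?_
      have hh : ¬ ((t:ℕ) < (jstar:ℕ)+1) := hp
      show (jstar:ℕ) < (t:ℕ)
      omega
    | top => exact htop z0
  · intro p hp
    cases p with
    | bot => exact absurd trivial hp
    | a t => exact dif_neg (by { intro hc; exact hp (by { show (t:ℕ) < (istar:ℕ)+1; omega }) })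
    | b t => exact dif_neg (by { intro hc; exact hp (by { show (t:ℕ) < (jstar:ℕ)+1; omega }) })
    | top => rfl
  · intro p hp
    cases p with
    | bot =>
      show lamA (M.map (homOfLE (Cml.bot_le' (.a istar)))
        (M.map (homOfLE (Cml.bot_le' .bot)) z0)) = 1
      rw [map_map]
      exact c2
    | a t =>
      have ht : (t : ℕ) ≤ (istar : ℕ) := by { have : (t:ℕ) < (istar:ℕ)+1 := hp; omega }
      show (if h : (t : ℕ) ≤ (istar : ℕ) then
          lamA.comp (M.map (homOfLE (show (Cml.a t : Cml m l) ≤ .a istar from h))).hom else 0)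
          (M.map (homOfLE (Cml.bot_le' (.a t))) z0) = 1
      rw [dif_pos ht]
      show lamA (M.map (homOfLE (show (Cml.a t : Cml m l) ≤ .a istar from ht))
        (M.map (homOfLE (Cml.bot_le' (.a t))) z0)) = 1
      rw [map_map]
      exact c2
    | b t =>
      have ht : (t : ℕ) ≤ (jstar : ℕ) := by { have : (t:ℕ) < (jstar:ℕ)+1 := hp; omega }
      show (if h : (t : ℕ) ≤ (jstar : ℕ) then
          lamB.comp (M.map (homOfLE (show (Cml.b t : Cml m l) ≤ .b jstar from h))).hom else 0)
          (M.map (homOfLE (Cml.bot_le' (.b t))) z0) = 1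
      rw [dif_pos ht]
      show lamB (M.map (homOfLE (show (Cml.b t : Cml m l) ≤ .b jstar from ht))
        (M.map (homOfLE (Cml.bot_le' (.b t))) z0)) = 1
      rw [map_map]
      exact c3
    | top => exact hp.elim
  · intro p q h hp
    exact map_map M (Cml.bot_le' p) h z0
  · intro p q h hq
    cases q with
    | bot =>
      cases p with
      | bot =>
        apply LinearMap.ext
        intro z
        show lamA (M.map (homOfLE (Cml.bot_le' (.a istar))) (M.map (homOfLE h) z))
            = lamA (M.map (homOfLE (Cml.bot_le' (.a istar))) z)
        rw [map_self M h z]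
      | a t => exact absurd h Cml.not_a_le_bot
      | b t => exact absurd h Cml.not_b_le_bot
      | top => exact absurd h Cml.not_top_le_bot
    | a t =>
      have ht : (t : ℕ) ≤ (istar : ℕ) := by { have : (t:ℕ) < (istar:ℕ)+1 := hq; omega }
      cases p with
      | bot =>
        show (if hh : (t : ℕ) ≤ (istar : ℕ) then
            lamA.comp (M.map (homOfLE (show (Cml.a t : Cml m l) ≤ .a istar from hh))).hom else 0).comp
            (M.map (homOfLE h)).hom
            = lamA.comp (M.map (homOfLE (Cml.bot_le' (.a istar)))).hom
        rw [dif_pos ht]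
        apply LinearMap.ext
        intro z
        show lamA (M.map (homOfLE (show (Cml.a t : Cml m l) ≤ .a istar from ht))
          (M.map (homOfLE h) z)) = lamA (M.map (homOfLE (Cml.bot_le' (.a istar))) z)
        rw [map_map]
      | a t' =>
        have ht' : (t' : ℕ) ≤ (istar : ℕ) := le_trans (show (t':ℕ) ≤ (t:ℕ) from h) ht
        show (if hh : (t : ℕ) ≤ (istar : ℕ) then
            lamA.comp (M.map (homOfLE (show (Cml.a t : Cml m l) ≤ .a istar from hh))).hom else 0).comp
            (M.map (homOfLE h)).hom
            = (if hh : (t' : ℕ) ≤ (istar : ℕ) then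
            lamA.comp (M.map (homOfLE (show (Cml.a t' : Cml m l) ≤ .a istar from hh))).hom else 0)
        rw [dif_pos ht, dif_pos ht']
        apply LinearMap.ext
        intro z
        show lamA (M.map (homOfLE (show (Cml.a t : Cml m l) ≤ .a istar from ht))
          (M.map (homOfLE h) z))
          = lamA (M.map (homOfLE (show (Cml.a t' : Cml m l) ≤ .a istar from ht')) z)
        rw [map_map]
      | b t' => exact absurd h (fun hh => hh)
      | top => exact absurd h Cml.not_top_le_a
    | b t =>
      have ht : (t : ℕ) ≤ (jstar : ℕ) := by { have : (t:ℕ) < (jstar:ℕ)+1 := hq; omega }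
      cases p with
      | bot =>
        show (if hh : (t : ℕ) ≤ (jstar : ℕ) then
            lamB.comp (M.map (homOfLE (show (Cml.b t : Cml m l) ≤ .b jstar from hh))).hom else 0).comp
            (M.map (homOfLE h)).hom
            = lamA.comp (M.map (homOfLE (Cml.bot_le' (.a istar)))).hom
        rw [dif_pos ht]
        apply LinearMap.ext
        intro z
        show lamB (M.map (homOfLE (show (Cml.b t : Cml m l) ≤ .b jstar from ht))
          (M.map (homOfLE h) z)) = lamA (M.map (homOfLE (Cml.bot_le' (.a istar))) z)
        rw [map_map]
        exact (c1 z).symm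
      | b t' =>
        have ht' : (t' : ℕ) ≤ (jstar : ℕ) := le_trans (show (t':ℕ) ≤ (t:ℕ) from h) ht
        show (if hh : (t : ℕ) ≤ (jstar : ℕ) then
            lamB.comp (M.map (homOfLE (show (Cml.b t : Cml m l) ≤ .b jstar from hh))).hom else 0).comp
            (M.map (homOfLE h)).hom
            = (if hh : (t' : ℕ) ≤ (jstar : ℕ) then
            lamB.comp (M.map (homOfLE (show (Cml.b t' : Cml m l) ≤ .b jstar from hh))).hom else 0)
        rw [dif_pos ht, dif_pos ht']
        apply LinearMap.ext
        intro z
        show lamB (M.map (homOfLE (show (Cml.b t : Cml m l) ≤ .b jstar from ht))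
          (M.map (homOfLE h) z))
          = lamB (M.map (homOfLE (show (Cml.b t' : Cml m l) ≤ .b jstar from ht')) z)
        rw [map_map]
      | a t' => exact absurd h (fun hh => hh)
      | top => exact absurd h Cml.not_top_le_b
    | top => exact hq.elim

open Classical in
theorem exists_minB (hl : 0 < l) (f : M.obj .top →ₗ[k] k)
    (hf : f.comp (M.map (homOfLE (Cml.le_top' (.b ⟨l - 1, by omega⟩)))).hom ≠ 0) :
    ∃ j : Fin l, f.comp (M.map (homOfLE (Cml.le_top' (.b j)))).hom ≠ 0 ∧
      ∀ t : Fin l, t < j → f.comp (M.map (homOfLE (Cml.le_top' (.b t)))).hom = 0 := by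
  set F := Finset.univ.filter
    (fun t : Fin l => f.comp (M.map (homOfLE (Cml.le_top' (.b t)))).hom ≠ 0) with hF
  have hFne : F.Nonempty := ⟨⟨l - 1, by omega⟩, Finset.mem_filter.mpr ⟨Finset.mem_univ _, hf⟩⟩
  refine ⟨F.min' hFne, (Finset.mem_filter.mp (F.min'_mem hFne)).2, ?_⟩
  intro t ht
  by_contra hne
  exact absurd (F.min'_le t (Finset.mem_filter.mpr ⟨Finset.mem_univ _, hne⟩)) (not_le.mpr ht)

open Classical in
theorem exists_minA (hm : 0 < m) (f : M.obj .top →ₗ[k] k)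
    (hf : f.comp (M.map (homOfLE (Cml.le_top' (.a ⟨m - 1, by omega⟩)))).hom ≠ 0) :
    ∃ j : Fin m, f.comp (M.map (homOfLE (Cml.le_top' (.a j)))).hom ≠ 0 ∧
      ∀ t : Fin m, t < j → f.comp (M.map (homOfLE (Cml.le_top' (.a t)))).hom = 0 := by
  set F := Finset.univ.filter
    (fun t : Fin m => f.comp (M.map (homOfLE (Cml.le_top' (.a t)))).hom ≠ 0) with hF
  have hFne : F.Nonempty := ⟨⟨m - 1, by omega⟩, Finset.mem_filter.mpr ⟨Finset.mem_univ _, hf⟩⟩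
  refine ⟨F.min' hFne, (Finset.mem_filter.mp (F.min'_mem hFne)).2, ?_⟩
  intro t ht
  by_contra hne
  exact absurd (F.min'_le t (Finset.mem_filter.mpr ⟨Finset.mem_univ _, hne⟩)) (not_le.mpr ht)

/-- Case B1: a functional on `M(top)` killing both incoming images: `{top}` splits. -/
theorem caseB1 (hm : 0 < m) (hl : 0 < l) (hU : ∀ z : M.obj .bot, z = 0)
    (f : M.obj .top →ₗ[k] k) (hf : f ≠ 0)
    (hfa : f.comp (M.map (homOfLE (Cml.le_top' (.a ⟨m - 1, by omega⟩)))).hom = 0)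
    (hfb : f.comp (M.map (homOfLE (Cml.le_top' (.b ⟨l - 1, by omega⟩)))).hom = 0) :
    Nonempty (SplitData k M) := by
  obtain ⟨w0, hw0⟩ := DFunLike.ne_iff.mp hf
  set w : M.obj .top := (f w0)⁻¹ • w0 with hw
  have hfw : f w = 1 := by
    rw [hw, map_smul, smul_eq_mul, inv_mul_cancel₀ hw0]
  refine ⟨{
    S := Cml.Uset m l
    hS := Cml.isInterval_Uset m l
    x := fun p => match p with
      | .top => w
      | _ => 0
    lam := fun p => match p with
      | .top => f
      | _ => 0
    x_zero := ?_
    lam_zero := ?_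
    pair := ?_
    x_nat := ?_
    lam_nat := ?_ }⟩
  · intro p hp
    cases p with
    | top => exact absurd trivial hp
    | _ => rfl
  · intro p hp
    cases p with
    | top => exact absurd trivial hp
    | _ => rfl
  · intro p hp
    cases p with
    | top => exact hfw
    | a t => exact absurd hp (not_le.mpr t.isLt)
    | b t => exact absurd hp (not_le.mpr t.isLt)
    | bot => exact hp.elim
  · intro p q h hp
    cases p with
    | top =>
      cases q with
      | top => exact map_self M h w
      | a t => exact absurd h Cml.not_top_le_a
      | b t => exact absurd h Cml.not_top_le_b
      | bot => exact absurd h Cml.not_top_le_bot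
    | a t => exact absurd hp (not_le.mpr t.isLt)
    | b t => exact absurd hp (not_le.mpr t.isLt)
    | bot => exact hp.elim
  · intro p q h hq
    cases q with
    | top =>
      cases p with
      | top =>
        apply LinearMap.ext
        intro z
        show f (M.map (homOfLE h) z) = f z
        rw [map_self M h z]
      | a t =>
        exact comp_factor_zero M (show (Cml.a t : Cml m l) ≤ .a ⟨m - 1, by omega⟩
          from by { show (t:ℕ) ≤ m - 1; omega }) (Cml.le_top' _) h f hfa
      | b t =>
        exact comp_factor_zero M (show (Cml.b t : Cml m l) ≤ .b ⟨l - 1, by omega⟩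
          from by { show (t:ℕ) ≤ l - 1; omega }) (Cml.le_top' _) h f hfb
      | bot =>
        apply LinearMap.ext
        intro z
        rw [hU z]
        simp
    | a t => exact absurd hq (not_le.mpr t.isLt)
    | b t => exact absurd hq (not_le.mpr t.isLt)
    | bot => exact hq.elim

/-- Case B2: a functional killing the `a`-side image but not the `b`-side. -/
theorem caseB2 (hm : 0 < m) (hl : 0 < l) (hU : ∀ z : M.obj .bot, z = 0)
    (f : M.obj .top →ₗ[k] k)
    (hfa : f.comp (M.map (homOfLE (Cml.le_top' (.a ⟨m - 1, by omega⟩)))).hom = 0)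
    (hfb : f.comp (M.map (homOfLE (Cml.le_top' (.b ⟨l - 1, by omega⟩)))).hom ≠ 0) :
    Nonempty (SplitData k M) := by
  obtain ⟨jmin, hj1, hj2⟩ := exists_minB M hl f hfb
  obtain ⟨y0, hy0⟩ := DFunLike.ne_iff.mp hj1
  set c : k := f (M.map (homOfLE (Cml.le_top' (.b jmin))) y0) with hc
  have hcne : c ≠ 0 := hy0
  set y : M.obj (.b jmin) := c⁻¹ • y0 with hy
  have hfy : f (M.map (homOfLE (Cml.le_top' (.b jmin))) y) = 1 := by
    rw [hy, map_smul, map_smul, smul_eq_mul, ← hc, inv_mul_cancel₀ hcne]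
  refine ⟨{
    S := Cml.Uset m (jmin : ℕ)
    hS := Cml.isInterval_Uset m (jmin : ℕ)
    x := fun p => match p with
      | .b t => if h : (jmin : ℕ) ≤ (t : ℕ) then
          M.map (homOfLE (show (Cml.b jmin : Cml m l) ≤ .b t from h)) y else 0
      | .top => M.map (homOfLE (Cml.le_top' (.b jmin))) y
      | _ => 0
    lam := fun p => match p with
      | .b t => f.comp (M.map (homOfLE (Cml.le_top' (.b t)))).hom
      | .top => f
      | _ => 0
    x_zero := ?_
    lam_zero := ?_
    pair := ?_
    x_nat := ?_
    lam_nat := ?_ }⟩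
  · intro p hp
    cases p with
    | top => exact absurd trivial hp
    | b t => exact dif_neg hp
    | a t => rfl
    | bot => rfl
  · intro p hp
    cases p with
    | top => exact absurd trivial hp
    | b t => exact hj2 t (by { have : ¬ ((jmin:ℕ) ≤ (t:ℕ)) := hp; show (t:ℕ) < (jmin:ℕ); omega })
    | a t => rfl
    | bot => rfl
  · intro p hp
    cases p with
    | top => exact hfy
    | b t =>
      have hp' : (jmin : ℕ) ≤ (t : ℕ) := hp
      show (f.comp (M.map (homOfLE (Cml.le_top' (.b t)))).hom)
        ((if h : (jmin : ℕ) ≤ (t : ℕ) then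
          M.map (homOfLE (show (Cml.b jmin : Cml m l) ≤ .b t from h)) y else 0)) = 1
      rw [dif_pos hp']
      show f (M.map (homOfLE (Cml.le_top' (.b t)))
        (M.map (homOfLE (show (Cml.b jmin : Cml m l) ≤ .b t from hp')) y)) = 1
      rw [map_map]
      exact hfy
    | a t => exact absurd hp (not_le.mpr t.isLt)
    | bot => exact hp.elim
  · intro p q h hp
    cases p with
    | top =>
      cases q with
      | top => exact map_self M h _
      | a t => exact absurd h Cml.not_top_le_a
      | b t => exact absurd h Cml.not_top_le_b
      | bot => exact absurd h Cml.not_top_le_bot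
    | b t =>
      have hp' : (jmin : ℕ) ≤ (t : ℕ) := hp
      cases q with
      | b t' =>
        have ht' : (jmin : ℕ) ≤ (t' : ℕ) := le_trans hp' (show (t:ℕ) ≤ (t':ℕ) from h)
        show M.map (homOfLE h) ((if hh : (jmin : ℕ) ≤ (t : ℕ) then
          M.map (homOfLE (show (Cml.b jmin : Cml m l) ≤ .b t from hh)) y else 0))
          = (if hh : (jmin : ℕ) ≤ (t' : ℕ) then
          M.map (homOfLE (show (Cml.b jmin : Cml m l) ≤ .b t' from hh)) y else 0)
        rw [dif_pos hp', dif_pos ht']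
        exact map_map M _ h y
      | top =>
        show M.map (homOfLE h) ((if hh : (jmin : ℕ) ≤ (t : ℕ) then
          M.map (homOfLE (show (Cml.b jmin : Cml m l) ≤ .b t from hh)) y else 0))
          = M.map (homOfLE (Cml.le_top' (.b jmin))) y
        rw [dif_pos hp']
        exact map_map M _ h y
      | a t' => exact absurd h (fun hh => hh)
      | bot => exact absurd h Cml.not_b_le_bot
    | a t => exact absurd hp (not_le.mpr t.isLt)
    | bot => exact hp.elim
  · intro p q h hq
    cases q with
    | top =>
      cases p with
      | top =>
        apply LinearMap.ext
        intro z
        show f (M.map (homOfLE h) z) = f z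
        rw [map_self M h z]
      | a t =>
        exact comp_factor_zero M (show (Cml.a t : Cml m l) ≤ .a ⟨m - 1, by omega⟩
          from by { show (t:ℕ) ≤ m - 1; omega }) (Cml.le_top' _) h f hfa
      | b t => rfl
      | bot =>
        apply LinearMap.ext
        intro z
        rw [hU z]
        simp
    | b t =>
      cases p with
      | b t' =>
        apply LinearMap.ext
        intro z
        show f (M.map (homOfLE (Cml.le_top' (.b t))) (M.map (homOfLE h) z))
            = f (M.map (homOfLE (Cml.le_top' (.b t'))) z)
        rw [map_map]
      | a t' => exact absurd h (fun hh => hh)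
      | top => exact absurd h Cml.not_top_le_b
      | bot =>
        apply LinearMap.ext
        intro z
        rw [hU z]
        simp
    | a t => exact absurd hq (not_le.mpr t.isLt)
    | bot => exact hq.elim

/-- Case B3: a functional killing the `b`-side image but not the `a`-side. -/
theorem caseB3 (hm : 0 < m) (hl : 0 < l) (hU : ∀ z : M.obj .bot, z = 0)
    (f : M.obj .top →ₗ[k] k)
    (hfb : f.comp (M.map (homOfLE (Cml.le_top' (.b ⟨l - 1, by omega⟩)))).hom = 0)
    (hfa : f.comp (M.map (homOfLE (Cml.le_top' (.a ⟨m - 1, by omega⟩)))).hom ≠ 0) :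
    Nonempty (SplitData k M) := by
  obtain ⟨imin, hi1, hi2⟩ := exists_minA M hm f hfa
  obtain ⟨y0, hy0⟩ := DFunLike.ne_iff.mp hi1
  set c : k := f (M.map (homOfLE (Cml.le_top' (.a imin))) y0) with hc
  have hcne : c ≠ 0 := hy0
  set y : M.obj (.a imin) := c⁻¹ • y0 with hy
  have hfy : f (M.map (homOfLE (Cml.le_top' (.a imin))) y) = 1 := by
    rw [hy, map_smul, map_smul, smul_eq_mul, ← hc, inv_mul_cancel₀ hcne]
  refine ⟨{
    S := Cml.Uset (imin : ℕ) l
    hS := Cml.isInterval_Uset (imin : ℕ) l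
    x := fun p => match p with
      | .a t => if h : (imin : ℕ) ≤ (t : ℕ) then
          M.map (homOfLE (show (Cml.a imin : Cml m l) ≤ .a t from h)) y else 0
      | .top => M.map (homOfLE (Cml.le_top' (.a imin))) y
      | _ => 0
    lam := fun p => match p with
      | .a t => f.comp (M.map (homOfLE (Cml.le_top' (.a t)))).hom
      | .top => f
      | _ => 0
    x_zero := ?_
    lam_zero := ?_
    pair := ?_
    x_nat := ?_
    lam_nat := ?_ }⟩
  · intro p hp
    cases p with
    | top => exact absurd trivial hp
    | a t => exact dif_neg hp
    | b t => rfl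
    | bot => rfl
  · intro p hp
    cases p with
    | top => exact absurd trivial hp
    | a t => exact hi2 t (by { have : ¬ ((imin:ℕ) ≤ (t:ℕ)) := hp; show (t:ℕ) < (imin:ℕ); omega })
    | b t => rfl
    | bot => rfl
  · intro p hp
    cases p with
    | top => exact hfy
    | a t =>
      have hp' : (imin : ℕ) ≤ (t : ℕ) := hp
      show (f.comp (M.map (homOfLE (Cml.le_top' (.a t)))).hom)
        ((if h : (imin : ℕ) ≤ (t : ℕ) then
          M.map (homOfLE (show (Cml.a imin : Cml m l) ≤ .a t from h)) y else 0)) = 1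
      rw [dif_pos hp']
      show f (M.map (homOfLE (Cml.le_top' (.a t)))
        (M.map (homOfLE (show (Cml.a imin : Cml m l) ≤ .a t from hp')) y)) = 1
      rw [map_map]
      exact hfy
    | b t => exact absurd hp (not_le.mpr t.isLt)
    | bot => exact hp.elim
  · intro p q h hp
    cases p with
    | top =>
      cases q with
      | top => exact map_self M h _
      | a t => exact absurd h Cml.not_top_le_a
      | b t => exact absurd h Cml.not_top_le_b
      | bot => exact absurd h Cml.not_top_le_bot
    | a t =>
      have hp' : (imin : ℕ) ≤ (t : ℕ) := hp
      cases q with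
      | a t' =>
        have ht' : (imin : ℕ) ≤ (t' : ℕ) := le_trans hp' (show (t:ℕ) ≤ (t':ℕ) from h)
        show M.map (homOfLE h) ((if hh : (imin : ℕ) ≤ (t : ℕ) then
          M.map (homOfLE (show (Cml.a imin : Cml m l) ≤ .a t from hh)) y else 0))
          = (if hh : (imin : ℕ) ≤ (t' : ℕ) then
          M.map (homOfLE (show (Cml.a imin : Cml m l) ≤ .a t' from hh)) y else 0)
        rw [dif_pos hp', dif_pos ht']
        exact map_map M _ h y
      | top =>
        show M.map (homOfLE h) ((if hh : (imin : ℕ) ≤ (t : ℕ) then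
          M.map (homOfLE (show (Cml.a imin : Cml m l) ≤ .a t from hh)) y else 0))
          = M.map (homOfLE (Cml.le_top' (.a imin))) y
        rw [dif_pos hp']
        exact map_map M _ h y
      | b t' => exact absurd h (fun hh => hh)
      | bot => exact absurd h Cml.not_a_le_bot
    | b t => exact absurd hp (not_le.mpr t.isLt)
    | bot => exact hp.elim
  · intro p q h hq
    cases q with
    | top =>
      cases p with
      | top =>
        apply LinearMap.ext
        intro z
        show f (M.map (homOfLE h) z) = f z
        rw [map_self M h z]
      | b t =>
        exact comp_factor_zero M (show (Cml.b t : Cml m l) ≤ .b ⟨l - 1, by omega⟩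
          from by { show (t:ℕ) ≤ l - 1; omega }) (Cml.le_top' _) h f hfb
      | a t => rfl
      | bot =>
        apply LinearMap.ext
        intro z
        rw [hU z]
        simp
    | a t =>
      cases p with
      | a t' =>
        apply LinearMap.ext
        intro z
        show f (M.map (homOfLE (Cml.le_top' (.a t))) (M.map (homOfLE h) z))
            = f (M.map (homOfLE (Cml.le_top' (.a t'))) z)
        rw [map_map]
      | b t' => exact absurd h (fun hh => hh)
      | top => exact absurd h Cml.not_top_le_a
      | bot =>
        apply LinearMap.ext
        intro z
        rw [hU z]
        simp
    | b t => exact absurd hq (not_le.mpr t.isLt)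
    | bot => exact hq.elim

/-- Case B4: every nonzero functional on `M(top)` sees both chains. -/
theorem caseB4 (hm : 0 < m) (hl : 0 < l) (hU : ∀ z : M.obj .bot, z = 0)
    (w0 : M.obj .top) (hw0 : w0 ≠ 0)
    (hall : ∀ g : M.obj .top →ₗ[k] k, g ≠ 0 →
      g.comp (M.map (homOfLE (Cml.le_top' (.a ⟨m - 1, by omega⟩)))).hom ≠ 0 ∧
      g.comp (M.map (homOfLE (Cml.le_top' (.b ⟨l - 1, by omega⟩)))).hom ≠ 0) :
    Nonempty (SplitData k M) := by
  classical
  set Fj := Finset.univ.filter (fun jj : Fin l => ∃ g : M.obj .top →ₗ[k] k, g ≠ 0 ∧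
    g.comp (M.map (homOfLE (Cml.le_top' (.b jj)))).hom ≠ 0 ∧
    ∀ t : Fin l, t < jj → g.comp (M.map (homOfLE (Cml.le_top' (.b t)))).hom = 0) with hFj
  have hFjne : Fj.Nonempty := by
    obtain ⟨f0, hf01, -⟩ := exists_dual_of_not_mem (⊥ : Submodule k (M.obj .top))
      (by simpa using hw0)
    have hf0ne : f0 ≠ 0 := by
      intro h0
      rw [h0] at hf01
      exact one_ne_zero ((rfl : (0 : M.obj .top →ₗ[k] k) w0 = 0) ▸ hf01.symm)
    obtain ⟨j0, hj01, hj02⟩ := exists_minB M hl f0 (hall f0 hf0ne).2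
    exact ⟨j0, Finset.mem_filter.mpr ⟨Finset.mem_univ _, f0, hf0ne, hj01, hj02⟩⟩
  set jstar := Fj.max' hFjne with hjstar
  obtain ⟨g0, hg0, hgb1, hgb2⟩ := (Finset.mem_filter.mp (Fj.max'_mem hFjne)).2
  -- maximality: every nonzero functional is nonzero on the image from `b jstar`
  have hmaxB : ∀ g : M.obj .top →ₗ[k] k, g ≠ 0 →
      g.comp (M.map (homOfLE (Cml.le_top' (.b jstar)))).hom ≠ 0 := by
    intro g hg hcontra
    obtain ⟨jg, hjg1, hjg2⟩ := exists_minB M hl g (hall g hg).2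
    have hjggt : jstar < jg := by
      rcases le_or_gt jg jstar with h | h
      · exact absurd (comp_factor_zero M (show (Cml.b jg : Cml m l) ≤ .b jstar from h)
          (Cml.le_top' _) (Cml.le_top' _) g hcontra) hjg1
      · exact h
    have : jg ∈ Fj := Finset.mem_filter.mpr ⟨Finset.mem_univ _, g, hg, hjg1, hjg2⟩
    exact absurd (Fj.le_max' jg this) (not_le.mpr hjggt)
  obtain ⟨istar, hga1, hga2⟩ := exists_minA M hm g0 (hall g0 hg0).1
  -- find a common element in the two images with `g0`-value 1
  set s : M.obj (.a istar) →ₗ[k] M.obj .top := (M.map (homOfLE (Cml.le_top' (.a istar)))).hom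
    with hs
  set tt : M.obj (.b jstar) →ₗ[k] M.obj .top := (M.map (homOfLE (Cml.le_top' (.b jstar)))).hom
    with htt
  have hint : ∃ (ya : M.obj (.a istar)) (yb : M.obj (.b jstar)),
      s ya = tt yb ∧ g0 (s ya) = 1 := by
    by_cases hex : ∃ (ya : M.obj (.a istar)) (yb : M.obj (.b jstar)),
        s ya = tt yb ∧ g0 (s ya) ≠ 0
    · obtain ⟨ya, yb, heq, hne⟩ := hex
      set c : k := g0 (s ya) with hc
      refine ⟨c⁻¹ • ya, c⁻¹ • yb, ?_, ?_⟩
      · rw [map_smul, map_smul, heq]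
      · rw [map_smul, map_smul, smul_eq_mul, inv_mul_cancel₀ hne]
    · push_neg at hex
      exfalso
      have hvan : ∀ (ya : M.obj (.a istar)) (yb : M.obj (.b jstar)),
          s ya = tt yb → g0 (s ya) = 0 := fun ya yb h => hex ya yb h
      obtain ⟨mu, hmu1, hmu2⟩ := exists_dual_extend s tt g0 hvan
      have hmune : mu ≠ 0 := by
        intro h0
        apply hga1
        apply LinearMap.ext
        intro z
        have : mu (s z) = g0 (s z) := hmu2 z
        rw [h0] at this
        exact ((rfl : (0 : M.obj .top →ₗ[k] k) (s z) = 0) ▸ this).symm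
      apply hmaxB mu hmune
      apply LinearMap.ext
      intro z
      exact hmu1 z
  obtain ⟨ya, yb, heq, hval⟩ := hint
  have hvalb : g0 (tt yb) = 1 := heq ▸ hval
  refine ⟨{
    S := Cml.Uset (istar : ℕ) (jstar : ℕ)
    hS := Cml.isInterval_Uset _ _
    x := fun p => match p with
      | .a t => if h : (istar : ℕ) ≤ (t : ℕ) then
          M.map (homOfLE (show (Cml.a istar : Cml m l) ≤ .a t from h)) ya else 0
      | .b t => if h : (jstar : ℕ) ≤ (t : ℕ) then
          M.map (homOfLE (show (Cml.b jstar : Cml m l) ≤ .b t from h)) yb else 0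
      | .top => s ya
      | .bot => 0
    lam := fun p => match p with
      | .a t => g0.comp (M.map (homOfLE (Cml.le_top' (.a t)))).hom
      | .b t => g0.comp (M.map (homOfLE (Cml.le_top' (.b t)))).hom
      | .top => g0
      | .bot => 0
    x_zero := ?_
    lam_zero := ?_
    pair := ?_
    x_nat := ?_
    lam_nat := ?_ }⟩
  · intro p hp
    cases p with
    | top => exact absurd trivial hp
    | a t => exact dif_neg hp
    | b t => exact dif_neg hp
    | bot => rfl
  · intro p hp
    cases p with
    | top => exact absurd trivial hp
    | a t => exact hga2 t (by { have : ¬ ((istar:ℕ) ≤ (t:ℕ)) := hp; show (t:ℕ) < (istar:ℕ); omega })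
    | b t => exact hgb2 t (by { have : ¬ ((jstar:ℕ) ≤ (t:ℕ)) := hp; show (t:ℕ) < (jstar:ℕ); omega })
    | bot => rfl
  · intro p hp
    cases p with
    | top => exact hval
    | a t =>
      have hp' : (istar : ℕ) ≤ (t : ℕ) := hp
      show (g0.comp (M.map (homOfLE (Cml.le_top' (.a t)))).hom)
        ((if h : (istar : ℕ) ≤ (t : ℕ) then
          M.map (homOfLE (show (Cml.a istar : Cml m l) ≤ .a t from h)) ya else 0)) = 1
      rw [dif_pos hp']
      show g0 (M.map (homOfLE (Cml.le_top' (.a t)))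
        (M.map (homOfLE (show (Cml.a istar : Cml m l) ≤ .a t from hp')) ya)) = 1
      rw [map_map]
      exact hval
    | b t =>
      have hp' : (jstar : ℕ) ≤ (t : ℕ) := hp
      show (g0.comp (M.map (homOfLE (Cml.le_top' (.b t)))).hom)
        ((if h : (jstar : ℕ) ≤ (t : ℕ) then
          M.map (homOfLE (show (Cml.b jstar : Cml m l) ≤ .b t from h)) yb else 0)) = 1
      rw [dif_pos hp']
      show g0 (M.map (homOfLE (Cml.le_top' (.b t)))
        (M.map (homOfLE (show (Cml.b jstar : Cml m l) ≤ .b t from hp')) yb)) = 1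
      rw [map_map]
      exact hvalb
    | bot => exact hp.elim
  · intro p q h hp
    cases p with
    | top =>
      cases q with
      | top => exact map_self M h _
      | a t => exact absurd h Cml.not_top_le_a
      | b t => exact absurd h Cml.not_top_le_b
      | bot => exact absurd h Cml.not_top_le_bot
    | a t =>
      have hp' : (istar : ℕ) ≤ (t : ℕ) := hp
      cases q with
      | a t' =>
        have ht' : (istar : ℕ) ≤ (t' : ℕ) := le_trans hp' (show (t:ℕ) ≤ (t':ℕ) from h)
        show M.map (homOfLE h) ((if hh : (istar : ℕ) ≤ (t : ℕ) then
          M.map (homOfLE (show (Cml.a istar : Cml m l) ≤ .a t from hh)) ya else 0))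
          = (if hh : (istar : ℕ) ≤ (t' : ℕ) then
          M.map (homOfLE (show (Cml.a istar : Cml m l) ≤ .a t' from hh)) ya else 0)
        rw [dif_pos hp', dif_pos ht']
        exact map_map M _ h ya
      | top =>
        show M.map (homOfLE h) ((if hh : (istar : ℕ) ≤ (t : ℕ) then
          M.map (homOfLE (show (Cml.a istar : Cml m l) ≤ .a t from hh)) ya else 0)) = s ya
        rw [dif_pos hp']
        exact map_map M _ h ya
      | b t' => exact absurd h (fun hh => hh)
      | bot => exact absurd h Cml.not_a_le_bot
    | b t =>
      have hp' : (jstar : ℕ) ≤ (t : ℕ) := hp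
      cases q with
      | b t' =>
        have ht' : (jstar : ℕ) ≤ (t' : ℕ) := le_trans hp' (show (t:ℕ) ≤ (t':ℕ) from h)
        show M.map (homOfLE h) ((if hh : (jstar : ℕ) ≤ (t : ℕ) then
          M.map (homOfLE (show (Cml.b jstar : Cml m l) ≤ .b t from hh)) yb else 0))
          = (if hh : (jstar : ℕ) ≤ (t' : ℕ) then
          M.map (homOfLE (show (Cml.b jstar : Cml m l) ≤ .b t' from hh)) yb else 0)
        rw [dif_pos hp', dif_pos ht']
        exact map_map M _ h yb
      | top =>
        show M.map (homOfLE h) ((if hh : (jstar : ℕ) ≤ (t : ℕ) then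
          M.map (homOfLE (show (Cml.b jstar : Cml m l) ≤ .b t from hh)) yb else 0)) = s ya
        rw [dif_pos hp']
        rw [heq]
        exact map_map M _ h yb
      | a t' => exact absurd h (fun hh => hh)
      | bot => exact absurd h Cml.not_b_le_bot
    | bot => exact hp.elim
  · intro p q h hq
    cases q with
    | top =>
      cases p with
      | top =>
        apply LinearMap.ext
        intro z
        show g0 (M.map (homOfLE h) z) = g0 z
        rw [map_self M h z]
      | a t => rfl
      | b t => rfl
      | bot =>
        apply LinearMap.ext
        intro z
        rw [hU z]
        simp
    | a t =>
      cases p with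
      | a t' =>
        apply LinearMap.ext
        intro z
        show g0 (M.map (homOfLE (Cml.le_top' (.a t))) (M.map (homOfLE h) z))
            = g0 (M.map (homOfLE (Cml.le_top' (.a t'))) z)
        rw [map_map]
      | b t' => exact absurd h (fun hh => hh)
      | top => exact absurd h Cml.not_top_le_a
      | bot =>
        apply LinearMap.ext
        intro z
        rw [hU z]
        simp
    | b t =>
      cases p with
      | b t' =>
        apply LinearMap.ext
        intro z
        show g0 (M.map (homOfLE (Cml.le_top' (.b t))) (M.map (homOfLE h) z))
            = g0 (M.map (homOfLE (Cml.le_top' (.b t'))) z)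
        rw [map_map]
      | a t' => exact absurd h (fun hh => hh)
      | top => exact absurd h Cml.not_top_le_b
      | bot =>
        apply LinearMap.ext
        intro z
        rw [hU z]
        simp
    | bot => exact hq.elim

/-- Case C (a-side): `M` vanishes at `bot` and `top`, nonzero somewhere on the `a`-chain. -/
theorem caseCa (hm : 0 < m) (hl : 0 < l) (hU : ∀ z : M.obj .bot, z = 0)
    (hW : ∀ w : M.obj .top, w = 0) (lo : Fin m) (z0 : M.obj (.a lo)) (hz0 : z0 ≠ 0)
    (hlomin : ∀ t : Fin m, t < lo → ∀ z : M.obj (.a t), z = 0) :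
    Nonempty (SplitData k M) := by
  classical
  set F := Finset.univ.filter (fun t : Fin m => ∃ h : (lo : ℕ) ≤ (t : ℕ),
    M.map (homOfLE (show (Cml.a lo : Cml m l) ≤ .a t from h)) z0 ≠ 0) with hF
  have hFne : F.Nonempty := ⟨lo, Finset.mem_filter.mpr ⟨Finset.mem_univ _, le_rfl,
    by { rw [map_self M _ z0]; exact hz0 }⟩⟩
  set hi := F.max' hFne with hhi
  obtain ⟨hlohi, hhine⟩ := (Finset.mem_filter.mp (F.max'_mem hFne)).2
  have hdeath : ∀ (t : Fin m) (h : (lo : ℕ) ≤ (t : ℕ)), (hi : ℕ) < (t : ℕ) →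
      M.map (homOfLE (show (Cml.a lo : Cml m l) ≤ .a t from h)) z0 = 0 := by
    intro t h hlt
    by_contra hne
    have : t ∈ F := Finset.mem_filter.mpr ⟨Finset.mem_univ _, h, hne⟩
    exact absurd (F.le_max' t this) (not_le.mpr hlt)
  obtain ⟨f, hf1, -⟩ := exists_dual_of_not_mem
    (⊥ : Submodule k (M.obj (.a hi))) (by simpa using hhine)
  refine ⟨{
    S := Cml.Aset (lo : ℕ) (hi : ℕ)
    hS := Cml.isInterval_Aset lo hi hlohi
    x := fun p => match p with
      | .a t => if h : (lo : ℕ) ≤ (t : ℕ) ∧ (t : ℕ) ≤ (hi : ℕ) then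
          M.map (homOfLE (show (Cml.a lo : Cml m l) ≤ .a t from h.1)) z0 else 0
      | _ => 0
    lam := fun p => match p with
      | .a t => if h : (lo : ℕ) ≤ (t : ℕ) ∧ (t : ℕ) ≤ (hi : ℕ) then
          f.comp (M.map (homOfLE (show (Cml.a t : Cml m l) ≤ .a hi from h.2))).hom else 0
      | _ => 0
    x_zero := ?_
    lam_zero := ?_
    pair := ?_
    x_nat := ?_
    lam_nat := ?_ }⟩
  · intro p hp
    cases p with
    | a t => exact dif_neg hp
    | bot => rfl
    | b t => rfl
    | top => rfl
  · intro p hp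
    cases p with
    | a t => exact dif_neg hp
    | bot => rfl
    | b t => rfl
    | top => rfl
  · intro p hp
    cases p with
    | a t =>
      have hp' : (lo : ℕ) ≤ (t : ℕ) ∧ (t : ℕ) ≤ (hi : ℕ) := hp
      show (if h : (lo : ℕ) ≤ (t : ℕ) ∧ (t : ℕ) ≤ (hi : ℕ) then
          f.comp (M.map (homOfLE (show (Cml.a t : Cml m l) ≤ .a hi from h.2))).hom else 0)
        ((if h : (lo : ℕ) ≤ (t : ℕ) ∧ (t : ℕ) ≤ (hi : ℕ) then
          M.map (homOfLE (show (Cml.a lo : Cml m l) ≤ .a t from h.1)) z0 else 0)) = 1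
      rw [dif_pos hp', dif_pos hp']
      show f (M.map (homOfLE (show (Cml.a t : Cml m l) ≤ .a hi from hp'.2))
        (M.map (homOfLE (show (Cml.a lo : Cml m l) ≤ .a t from hp'.1)) z0)) = 1
      rw [map_map]
      exact hf1
    | bot => exact hp.elim
    | b t => exact hp.elim
    | top => exact hp.elim
  · intro p q h hp
    cases p with
    | a t =>
      have hp' : (lo : ℕ) ≤ (t : ℕ) ∧ (t : ℕ) ≤ (hi : ℕ) := hp
      cases q with
      | a t' =>
        show M.map (homOfLE h) ((if hh : (lo : ℕ) ≤ (t : ℕ) ∧ (t : ℕ) ≤ (hi : ℕ) then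
          M.map (homOfLE (show (Cml.a lo : Cml m l) ≤ .a t from hh.1)) z0 else 0))
          = (if hh : (lo : ℕ) ≤ (t' : ℕ) ∧ (t' : ℕ) ≤ (hi : ℕ) then
          M.map (homOfLE (show (Cml.a lo : Cml m l) ≤ .a t' from hh.1)) z0 else 0)
        rw [dif_pos hp']
        have hlot' : (lo : ℕ) ≤ (t' : ℕ) := le_trans hp'.1 (show (t:ℕ) ≤ (t':ℕ) from h)
        by_cases ht' : (t' : ℕ) ≤ (hi : ℕ)
        · rw [dif_pos ⟨hlot', ht'⟩]
          exact map_map M _ h z0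
        · rw [dif_neg (by { intro hc; exact ht' hc.2 })]
          rw [map_map M _ h z0]
          exact hdeath t' hlot' (by omega)
      | top =>
        exact hW _
      | b t' => exact absurd h (fun hh => hh)
      | bot => exact absurd h Cml.not_a_le_bot
    | bot => exact hp.elim
    | b t => exact hp.elim
    | top => exact hp.elim
  · intro p q h hq
    cases q with
    | a t =>
      have hq' : (lo : ℕ) ≤ (t : ℕ) ∧ (t : ℕ) ≤ (hi : ℕ) := hq
      cases p with
      | a t' =>
        show (if hh : (lo : ℕ) ≤ (t : ℕ) ∧ (t : ℕ) ≤ (hi : ℕ) then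
          f.comp (M.map (homOfLE (show (Cml.a t : Cml m l) ≤ .a hi from hh.2))).hom else 0).comp
          (M.map (homOfLE h)).hom
          = (if hh : (lo : ℕ) ≤ (t' : ℕ) ∧ (t' : ℕ) ≤ (hi : ℕ) then
          f.comp (M.map (homOfLE (show (Cml.a t' : Cml m l) ≤ .a hi from hh.2))).hom else 0)
        rw [dif_pos hq']
        have ht'hi : (t' : ℕ) ≤ (hi : ℕ) := le_trans (show (t':ℕ) ≤ (t:ℕ) from h) hq'.2
        by_cases hlot' : (lo : ℕ) ≤ (t' : ℕ)
        · rw [dif_pos ⟨hlot', ht'hi⟩]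
          apply LinearMap.ext
          intro z
          show f (M.map (homOfLE (show (Cml.a t : Cml m l) ≤ .a hi from hq'.2))
            (M.map (homOfLE h) z))
            = f (M.map (homOfLE (show (Cml.a t' : Cml m l) ≤ .a hi from ht'hi)) z)
          rw [map_map]
        · rw [dif_neg (by { intro hc; exact hlot' hc.1 })]
          apply LinearMap.ext
          intro z
          rw [hlomin t' (by { show (t':ℕ) < (lo:ℕ); omega }) z]
          simp
      | bot =>
        apply LinearMap.ext
        intro z
        rw [hU z]
        simp
      | b t' => exact absurd h (fun hh => hh)
      | top => exact absurd h Cml.not_top_le_a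
    | bot => exact hq.elim
    | b t => exact hq.elim
    | top => exact hq.elim

/-- Case C (b-side): `M` vanishes at `bot` and `top`, nonzero somewhere on the `b`-chain. -/
theorem caseCb (hm : 0 < m) (hl : 0 < l) (hU : ∀ z : M.obj .bot, z = 0)
    (hW : ∀ w : M.obj .top, w = 0) (lo : Fin l) (z0 : M.obj (.b lo)) (hz0 : z0 ≠ 0)
    (hlomin : ∀ t : Fin l, t < lo → ∀ z : M.obj (.b t), z = 0) :
    Nonempty (SplitData k M) := by
  classical
  set F := Finset.univ.filter (fun t : Fin l => ∃ h : (lo : ℕ) ≤ (t : ℕ),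
    M.map (homOfLE (show (Cml.b lo : Cml m l) ≤ .b t from h)) z0 ≠ 0) with hF
  have hFne : F.Nonempty := ⟨lo, Finset.mem_filter.mpr ⟨Finset.mem_univ _, le_rfl,
    by { rw [map_self M _ z0]; exact hz0 }⟩⟩
  set hi := F.max' hFne with hhi
  obtain ⟨hlohi, hhine⟩ := (Finset.mem_filter.mp (F.max'_mem hFne)).2
  have hdeath : ∀ (t : Fin l) (h : (lo : ℕ) ≤ (t : ℕ)), (hi : ℕ) < (t : ℕ) →
      M.map (homOfLE (show (Cml.b lo : Cml m l) ≤ .b t from h)) z0 = 0 := by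
    intro t h hlt
    by_contra hne
    have : t ∈ F := Finset.mem_filter.mpr ⟨Finset.mem_univ _, h, hne⟩
    exact absurd (F.le_max' t this) (not_le.mpr hlt)
  obtain ⟨f, hf1, -⟩ := exists_dual_of_not_mem
    (⊥ : Submodule k (M.obj (.b hi))) (by simpa using hhine)
  refine ⟨{
    S := Cml.Bset (lo : ℕ) (hi : ℕ)
    hS := Cml.isInterval_Bset lo hi hlohi
    x := fun p => match p with
      | .b t => if h : (lo : ℕ) ≤ (t : ℕ) ∧ (t : ℕ) ≤ (hi : ℕ) then
          M.map (homOfLE (show (Cml.b lo : Cml m l) ≤ .b t from h.1)) z0 else 0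
      | _ => 0
    lam := fun p => match p with
      | .b t => if h : (lo : ℕ) ≤ (t : ℕ) ∧ (t : ℕ) ≤ (hi : ℕ) then
          f.comp (M.map (homOfLE (show (Cml.b t : Cml m l) ≤ .b hi from h.2))).hom else 0
      | _ => 0
    x_zero := ?_
    lam_zero := ?_
    pair := ?_
    x_nat := ?_
    lam_nat := ?_ }⟩
  · intro p hp
    cases p with
    | b t => exact dif_neg hp
    | bot => rfl
    | a t => rfl
    | top => rfl
  · intro p hp
    cases p with
    | b t => exact dif_neg hp
    | bot => rfl
    | a t => rfl
    | top => rfl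
  · intro p hp
    cases p with
    | b t =>
      have hp' : (lo : ℕ) ≤ (t : ℕ) ∧ (t : ℕ) ≤ (hi : ℕ) := hp
      show (if h : (lo : ℕ) ≤ (t : ℕ) ∧ (t : ℕ) ≤ (hi : ℕ) then
          f.comp (M.map (homOfLE (show (Cml.b t : Cml m l) ≤ .b hi from h.2))).hom else 0)
        ((if h : (lo : ℕ) ≤ (t : ℕ) ∧ (t : ℕ) ≤ (hi : ℕ) then
          M.map (homOfLE (show (Cml.b lo : Cml m l) ≤ .b t from h.1)) z0 else 0)) = 1
      rw [dif_pos hp', dif_pos hp']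
      show f (M.map (homOfLE (show (Cml.b t : Cml m l) ≤ .b hi from hp'.2))
        (M.map (homOfLE (show (Cml.b lo : Cml m l) ≤ .b t from hp'.1)) z0)) = 1
      rw [map_map]
      exact hf1
    | bot => exact hp.elim
    | a t => exact hp.elim
    | top => exact hp.elim
  · intro p q h hp
    cases p with
    | b t =>
      have hp' : (lo : ℕ) ≤ (t : ℕ) ∧ (t : ℕ) ≤ (hi : ℕ) := hp
      cases q with
      | b t' =>
        show M.map (homOfLE h) ((if hh : (lo : ℕ) ≤ (t : ℕ) ∧ (t : ℕ) ≤ (hi : ℕ) then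
          M.map (homOfLE (show (Cml.b lo : Cml m l) ≤ .b t from hh.1)) z0 else 0))
          = (if hh : (lo : ℕ) ≤ (t' : ℕ) ∧ (t' : ℕ) ≤ (hi : ℕ) then
          M.map (homOfLE (show (Cml.b lo : Cml m l) ≤ .b t' from hh.1)) z0 else 0)
        rw [dif_pos hp']
        have hlot' : (lo : ℕ) ≤ (t' : ℕ) := le_trans hp'.1 (show (t:ℕ) ≤ (t':ℕ) from h)
        by_cases ht' : (t' : ℕ) ≤ (hi : ℕ)
        · rw [dif_pos ⟨hlot', ht'⟩]
          exact map_map M _ h z0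
        · rw [dif_neg (by { intro hc; exact ht' hc.2 })]
          rw [map_map M _ h z0]
          exact hdeath t' hlot' (by omega)
      | top =>
        exact hW _
      | a t' => exact absurd h (fun hh => hh)
      | bot => exact absurd h Cml.not_b_le_bot
    | bot => exact hp.elim
    | a t => exact hp.elim
    | top => exact hp.elim
  · intro p q h hq
    cases q with
    | b t =>
      have hq' : (lo : ℕ) ≤ (t : ℕ) ∧ (t : ℕ) ≤ (hi : ℕ) := hq
      cases p with
      | b t' =>
        show (if hh : (lo : ℕ) ≤ (t : ℕ) ∧ (t : ℕ) ≤ (hi : ℕ) then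
          f.comp (M.map (homOfLE (show (Cml.b t : Cml m l) ≤ .b hi from hh.2))).hom else 0).comp
          (M.map (homOfLE h)).hom
          = (if hh : (lo : ℕ) ≤ (t' : ℕ) ∧ (t' : ℕ) ≤ (hi : ℕ) then
          f.comp (M.map (homOfLE (show (Cml.b t' : Cml m l) ≤ .b hi from hh.2))).hom else 0)
        rw [dif_pos hq']
        have ht'hi : (t' : ℕ) ≤ (hi : ℕ) := le_trans (show (t':ℕ) ≤ (t:ℕ) from h) hq'.2
        by_cases hlot' : (lo : ℕ) ≤ (t' : ℕ)
        · rw [dif_pos ⟨hlot', ht'hi⟩]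
          apply LinearMap.ext
          intro z
          show f (M.map (homOfLE (show (Cml.b t : Cml m l) ≤ .b hi from hq'.2))
            (M.map (homOfLE h) z))
            = f (M.map (homOfLE (show (Cml.b t' : Cml m l) ≤ .b hi from ht'hi)) z)
          rw [map_map]
        · rw [dif_neg (by { intro hc; exact hlot' hc.1 })]
          apply LinearMap.ext
          intro z
          rw [hlomin t' (by { show (t':ℕ) < (lo:ℕ); omega }) z]
          simp
      | bot =>
        apply LinearMap.ext
        intro z
        rw [hU z]
        simp
      | a t' => exact absurd h (fun hh => hh)
      | top => exact absurd h Cml.not_top_le_b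
    | bot => exact hq.elim
    | a t => exact hq.elim
    | top => exact hq.elim

end Cases

/-- The key existence result: every nonzero module over `Cml m l` admits splitting data. -/
theorem exists_splitdata (hm : 0 < m) (hl : 0 < l) (M : Cml m l ⥤ ModuleCat.{0} k)
    (hM : ¬ IsZero M) : Nonempty (SplitData k M) := by
  classical
  by_cases hU : ∀ z : M.obj .bot, z = 0
  · by_cases hW : ∀ w : M.obj .top, w = 0
    · -- Case C: supported on the chains
      by_cases hA : ∃ (t : Fin m) (z : M.obj (.a t)), z ≠ 0
      · set F := Finset.univ.filter (fun t : Fin m => ∃ z : M.obj (.a t), z ≠ 0) with hF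
        have hFne : F.Nonempty := by
          obtain ⟨t, z, hz⟩ := hA
          exact ⟨t, Finset.mem_filter.mpr ⟨Finset.mem_univ _, z, hz⟩⟩
        obtain ⟨z0, hz0⟩ := (Finset.mem_filter.mp (F.min'_mem hFne)).2
        refine caseCa M hm hl hU hW (F.min' hFne) z0 hz0 ?_
        intro t ht z
        by_contra hz
        exact absurd (F.min'_le t (Finset.mem_filter.mpr ⟨Finset.mem_univ _, z, hz⟩))
          (not_le.mpr ht)
      · by_cases hB : ∃ (t : Fin l) (z : M.obj (.b t)), z ≠ 0
        · set F := Finset.univ.filter (fun t : Fin l => ∃ z : M.obj (.b t), z ≠ 0) with hF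
          have hFne : F.Nonempty := by
            obtain ⟨t, z, hz⟩ := hB
            exact ⟨t, Finset.mem_filter.mpr ⟨Finset.mem_univ _, z, hz⟩⟩
          obtain ⟨z0, hz0⟩ := (Finset.mem_filter.mp (F.min'_mem hFne)).2
          refine caseCb M hm hl hU hW (F.min' hFne) z0 hz0 ?_
          intro t ht z
          by_contra hz
          exact absurd (F.min'_le t (Finset.mem_filter.mpr ⟨Finset.mem_univ _, z, hz⟩))
            (not_le.mpr ht)
        · exfalso
          apply hM
          rw [Functor.isZero_iff]
          intro p
          apply moduleCat_isZero_of_forall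
          intro z
          cases p with
          | bot => exact hU z
          | top => exact hW z
          | a t =>
            by_contra hz
            exact hA ⟨t, z, hz⟩
          | b t =>
            by_contra hz
            exact hB ⟨t, z, hz⟩
    · -- Branch B: M(top) ≠ 0
      push_neg at hW
      obtain ⟨w0, hw0⟩ := hW
      by_cases hB1 : ∃ f : M.obj .top →ₗ[k] k, f ≠ 0 ∧
          f.comp (M.map (homOfLE (Cml.le_top' (.a ⟨m - 1, by omega⟩)))).hom = 0 ∧
          f.comp (M.map (homOfLE (Cml.le_top' (.b ⟨l - 1, by omega⟩)))).hom = 0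
      · obtain ⟨f, hf, hfa, hfb⟩ := hB1
        exact caseB1 M hm hl hU f hf hfa hfb
      · by_cases hB2 : ∃ f : M.obj .top →ₗ[k] k,
            f.comp (M.map (homOfLE (Cml.le_top' (.a ⟨m - 1, by omega⟩)))).hom = 0 ∧
            f.comp (M.map (homOfLE (Cml.le_top' (.b ⟨l - 1, by omega⟩)))).hom ≠ 0
        · obtain ⟨f, hfa, hfb⟩ := hB2
          exact caseB2 M hm hl hU f hfa hfb
        · by_cases hB3 : ∃ f : M.obj .top →ₗ[k] k,
              f.comp (M.map (homOfLE (Cml.le_top' (.b ⟨l - 1, by omega⟩)))).hom = 0 ∧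
              f.comp (M.map (homOfLE (Cml.le_top' (.a ⟨m - 1, by omega⟩)))).hom ≠ 0
          · obtain ⟨f, hfb, hfa⟩ := hB3
            exact caseB3 M hm hl hU f hfb hfa
          · refine caseB4 M hm hl hU w0 hw0 ?_
            intro g hg
            constructor
            · intro hga
              by_cases hgb : g.comp (M.map (homOfLE (Cml.le_top' (.b ⟨l - 1, by omega⟩)))).hom = 0
              · exact hB1 ⟨g, hg, hga, hgb⟩
              · exact hB2 ⟨g, hga, hgb⟩
            · intro hgb
              by_cases hga : g.comp (M.map (homOfLE (Cml.le_top' (.a ⟨m - 1, by omega⟩)))).hom = 0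
              · exact hB1 ⟨g, hg, hga, hgb⟩
              · exact hB3 ⟨g, hgb, hga⟩
  · -- Branch A: M(bot) ≠ 0
    push_neg at hU
    obtain ⟨x0, hx0⟩ := hU
    by_cases hA1 : ∃ z : M.obj .bot, M.map (homOfLE (Cml.bot_le' .top)) z ≠ 0
    · obtain ⟨z, hz⟩ := hA1
      exact caseA1 M z hz
    · push_neg at hA1
      by_cases hA2 : ∃ z : M.obj .bot, z ≠ 0 ∧
          M.map (homOfLE (Cml.bot_le' (.a ⟨0, hm⟩))) z = 0 ∧
          M.map (homOfLE (Cml.bot_le' (.b ⟨0, hl⟩))) z = 0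
      · obtain ⟨z, hz, ha, hb⟩ := hA2
        exact caseA2 M hm hl z hz ha hb
      · by_cases hA3 : ∃ z : M.obj .bot, z ≠ 0 ∧
            M.map (homOfLE (Cml.bot_le' (.a ⟨0, hm⟩))) z = 0
        · obtain ⟨z, hz, ha⟩ := hA3
          have hb : M.map (homOfLE (Cml.bot_le' (.b ⟨0, hl⟩))) z ≠ 0 := by
            intro h0
            exact hA2 ⟨z, hz, ha, h0⟩
          exact caseA3 M hm hl z hz ha (hA1 z) hb
        · by_cases hA4 : ∃ z : M.obj .bot, z ≠ 0 ∧
              M.map (homOfLE (Cml.bot_le' (.b ⟨0, hl⟩))) z = 0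
          · obtain ⟨z, hz, hb⟩ := hA4
            have ha : M.map (homOfLE (Cml.bot_le' (.a ⟨0, hm⟩))) z ≠ 0 := by
              intro h0
              exact hA3 ⟨z, hz, h0⟩
            exact caseA4 M hm hl z hb (hA1 z) ha
          · refine caseA5 M hm hl x0 hx0 hA1 ?_
            intro z hz
            constructor
            · intro h0
              exact hA3 ⟨z, hz, h0⟩
            · intro h0
              exact hA4 ⟨z, hz, h0⟩

theorem zero_decomp {M : Cml m l ⥤ ModuleCat.{0} k} (hz : IsZero M) :
    IsIntervalDecomposable k M :=
  ⟨0, fun i => i.elim0, fun i => i.elim0, ⟨hz.iso (isZero_biproduct_empty _)⟩⟩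

theorem decomp_of_tdim_le (hm : 0 < m) (hl : 0 < l) (n : ℕ) :
    ∀ (M : Cml m l ⥤ ModuleCat.{0} k), PointwiseFinite k M → tdim M ≤ n →
      IsIntervalDecomposable k M := by
  induction n with
  | zero =>
    intro M hfin h0
    exact zero_decomp (isZero_of_tdim_zero hfin (Nat.le_zero.mp h0))
  | succ n ih =>
    intro M hfin h
    by_cases hz : IsZero M
    · exact zero_decomp hz
    · obtain ⟨D⟩ := exists_splitdata hm hl M hz
      have hlt : tdim D.Nfun < tdim M := tdim_Nfun_lt hfin D
      obtain ⟨n', J', hJ', ⟨e⟩⟩ := ih D.Nfun (pointwiseFinite_Nfun hfin D)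
        (by omega)
      refine ⟨n' + 1, Fin.cons D.I J', ?_, ?_⟩
      · intro i
        induction i using Fin.cases with
        | zero =>
          exact ⟨D.S, D.hS, ⟨Iso.refl _⟩⟩
        | succ i => exact hJ' i
      · exact ⟨iso_biproduct_cons D.sigma D.rho D.iota D.pi D.sigma_rho D.iota_pi
          D.sigma_pi D.iota_rho D.rho_sigma_add_pi_iota J' e⟩

theorem decomp_main (hm : 0 < m) (hl : 0 < l) (M : Cml m l ⥤ ModuleCat.{0} k)
    (hfin : PointwiseFinite k M) : IsIntervalDecomposable k M :=
  decomp_of_tdim_le hm hl (tdim M) M hfin le_rfl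

theorem indec_main (hm : 0 < m) (hl : 0 < l) (M : Cml m l ⥤ ModuleCat.{0} k)
    (hfin : PointwiseFinite k M) (hind : Indecomposable M) : IsIntervalModule k M := by
  obtain ⟨n, J, hJ, ⟨e⟩⟩ := decomp_main hm hl M hfin
  match n with
  | 0 =>
    exact absurd (e.isZero_iff.mpr (isZero_biproduct_empty J)) hind.1
  | n + 1 =>
    have e2 : M ≅ (J 0) ⊞ (⨁ (fun i : Fin n => J i.succ)) := e ≪≫ biproductSuccIso J
    obtain ⟨S, hS, ⟨eI⟩⟩ := hJ 0
    rcases hind.2 _ _ e2 with h | h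
    · exact absurd (eI.isZero_iff.mp h) (intervalModule_not_isZero S hS.1 hS.2.1)
    · exact ⟨S, hS, ⟨e2 ≪≫ iso_of_isZero_right h ≪≫ eI⟩⟩

end MainInduction

/-- Every persistence module over the poset `C_{m,ℓ}` (`m, ℓ > 0`) is
interval-decomposable; equivalently, every indecomposable persistence module over `C_{m,ℓ}`
is an interval module. -/
theorem cml_intervalDecomposable
    (k : Type) [Field k] (m l : ℕ) (hm : 0 < m) (hl : 0 < l) :
    (∀ M : Cml m l ⥤ ModuleCat.{0} k, PointwiseFinite k M → IsIntervalDecomposable k M) ∧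
    (∀ M : Cml m l ⥤ ModuleCat.{0} k, PointwiseFinite k M → Indecomposable M →
      IsIntervalModule k M) := by
  constructor
  · intro M hfin
    exact decomp_main hm hl M hfin
  · intro M hfin hind
    exact indec_main hm hl M hfin hind
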